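/- arXiv:1212.6211 — 10 statements merged into one kernel-verified Lean document; each statement's English description precedes it below -/
import Mathlib

section
/- Let f(x) = M(1-Ax)^{-s} + (1+Bx)^{-s} where A, B, M are positive real constants and s > 0. Then for every x in [0, 1/A), f(x) ≥ M + min{1, AM/B}. -/
lemma bern_neg {u p : ℝ} (hu : -1 < u) (hp : p ≤ 0) : 1 + p * u ≤ (1 + u) ^ p := by
  have h1 : 0 < 1 + u := by linarith
  rw [Real.rpow_def_of_pos h1]
  have hlog : Real.log (1 + u) ≤ u := by
    have := Real.log_le_sub_one_of_pos h1; linarith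
  have h2 : p * u ≤ p * Real.log (1 + u) := mul_le_mul_of_nonpos_left hlog hp
  have h3 := Real.add_one_le_exp (p * Real.log (1 + u))
  rw [mul_comm (Real.log (1 + u)) p]
  linarith

theorem stmt_0 (A B M s x : ℝ) (hA : 0 < A) (hB : 0 < B) (hM : 0 < M) (hs : 0 < s)
    (hx0 : 0 ≤ x) (hx1 : x < 1 / A) :
    M + min 1 (A * M / B) ≤ M * (1 - A * x) ^ (-s) + (1 + B * x) ^ (-s) := by
  set m := min 1 (A * M / B) with hm
  have hAx : A * x < 1 := by
    rw [lt_div_iff₀ hA] at hx1; linarith [hx1]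
  have hm1 : m ≤ 1 := min_le_left _ _
  have hmB : m * B ≤ A * M := by
    have h := min_le_right 1 (A * M / B)
    calc m * B ≤ (A * M / B) * B := by nlinarith
    _ = A * M := by field_simp
  have h1 : 1 + s * (A * x) ≤ (1 - A * x) ^ (-s) := by
    have := bern_neg (u := -(A * x)) (p := -s) (by linarith) (by linarith)
    have e : 1 + -(A * x) = 1 - A * x := by ring
    rw [e] at this; linarith
  have h2 : 1 - s * (B * x) ≤ (1 + B * x) ^ (-s) := by
    have := bern_neg (u := B * x) (p := -s) (by nlinarith) (by linarith)
    linarith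
  have hpos2 : 0 < (1 + B * x) ^ (-s) := Real.rpow_pos_of_pos (by nlinarith) _
  have hmpos : 0 < m := lt_min one_pos (by positivity)
  have key1 : m * (s * (B * x)) ≤ M * (s * (A * x)) := by nlinarith [mul_nonneg (mul_nonneg (sub_nonneg.mpr hmB) hs.le) hx0]
  have key2 : m * (1 - s * (B * x)) ≤ (1 + B * x) ^ (-s) := by
    rcases le_or_gt 0 (1 - s * (B * x)) with h | h
    · calc m * (1 - s * (B * x)) ≤ 1 * (1 - s * (B * x)) := by nlinarith
      _ = 1 - s * (B * x) := by ring
      _ ≤ _ := h2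
    · nlinarith
  have hM1 : M * (1 + s * (A * x)) ≤ M * (1 - A * x) ^ (-s) :=
    mul_le_mul_of_nonneg_left h1 hM.le
  nlinarith [key1, key2, hM1]
end

section
/- For any compact infinite metric space (A, ρ) and any N ≥ 2, there exists an N-point best-packing configuration ω_N on A such that the mesh norm η(ω_N, A) is at most the separation distance δ(ω_N); equivalently γ(ω_N, A) ≤ 1. -/
open scoped BigOperators Classical
open Filter Metric

/-- Separation distance of an `N`-point configuration. -/
noncomputable def sep {E : Type*} [MetricSpace E] {N : ℕ} (x : Fin N → E) : ℝ :=
  ⨅ p : {p : Fin N × Fin N // p.1 ≠ p.2}, dist (x p.1.1) (x p.1.2)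

/-- Mesh norm (covering radius) of a configuration relative to a set `S`. -/
noncomputable def mesh {E : Type*} [MetricSpace E] {N : ℕ} (S : Set E) (x : Fin N → E) : ℝ :=
  ⨆ y : S, ⨅ i, dist (y : E) (x i)

/-- `N`-point best-packing distance of the set `S`. -/
noncomputable def packDist {E : Type*} [MetricSpace E] (S : Set E) (N : ℕ) : ℝ :=
  ⨆ x : {x : Fin N → E // Function.Injective x ∧ ∀ i, x i ∈ S}, sep x.1

/-- Riesz `s`-energy of a configuration. -/
noncomputable def energy {E : Type*} [MetricSpace E] {N : ℕ} (s : ℝ) (x : Fin N → E) : ℝ :=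
  ∑ i, ∑ j ∈ Finset.univ.filter (· ≠ i), dist (x i) (x j) ^ (-s)

/-- Minimal `N`-point Riesz `s`-energy of the set `S`. -/
noncomputable def minEnergy {E : Type*} [MetricSpace E] (S : Set E) (N : ℕ) (s : ℝ) : ℝ :=
  ⨅ x : {x : Fin N → E // Function.Injective x ∧ ∀ i, x i ∈ S}, energy s x.1

section Aux

variable {A : Type*} [MetricSpace A] {N : ℕ}

private lemma idx_nonempty (hN : 2 ≤ N) :
    Nonempty {p : Fin N × Fin N // p.1 ≠ p.2} :=
  ⟨⟨(⟨0, by omega⟩, ⟨1, by omega⟩), by simp [Prod.ext_iff, Fin.ext_iff]⟩⟩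

lemma sep_le_dist (x : Fin N → A) {i j : Fin N} (h : i ≠ j) :
    sep x ≤ dist (x i) (x j) := by
  unfold sep
  exact ciInf_le (Finite.bddBelow_range _) (⟨(i, j), h⟩ : {p : Fin N × Fin N // p.1 ≠ p.2})

lemma le_sep (hN : 2 ≤ N) {x : Fin N → A} {c : ℝ}
    (h : ∀ i j, i ≠ j → c ≤ dist (x i) (x j)) : c ≤ sep x := by
  haveI := idx_nonempty (N := N) hN
  exact le_ciInf fun p => h p.1.1 p.1.2 p.2

lemma sep_eq_inf' (hN : 2 ≤ N) (x : Fin N → A) :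
    haveI := idx_nonempty (N := N) hN
    sep x = Finset.univ.inf' Finset.univ_nonempty
      (fun p : {p : Fin N × Fin N // p.1 ≠ p.2} => dist (x p.1.1) (x p.1.2)) := by
  haveI := idx_nonempty (N := N) hN
  exact (Finset.inf'_univ_eq_ciInf _).symm

lemma exists_sep_eq (hN : 2 ≤ N) (x : Fin N → A) :
    ∃ i j, i ≠ j ∧ dist (x i) (x j) = sep x := by
  haveI := idx_nonempty (N := N) hN
  obtain ⟨p, -, hp⟩ := Finset.exists_mem_eq_inf' (Finset.univ_nonempty)
    (fun p : {p : Fin N × Fin N // p.1 ≠ p.2} => dist (x p.1.1) (x p.1.2))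
  exact ⟨p.1.1, p.1.2, p.2, by rw [sep_eq_inf' hN x, hp]⟩

lemma sep_pos (hN : 2 ≤ N) {x : Fin N → A} (hx : Function.Injective x) :
    0 < sep x := by
  obtain ⟨i, j, hij, h⟩ := exists_sep_eq hN x
  rw [← h]
  exact dist_pos.2 fun e => hij (hx e)

lemma sep_continuous (hN : 2 ≤ N) :
    Continuous (sep : (Fin N → A) → ℝ) := by
  haveI := idx_nonempty (N := N) hN
  have : (sep : (Fin N → A) → ℝ) = fun x => Finset.univ.inf' Finset.univ_nonempty
      (fun p : {p : Fin N × Fin N // p.1 ≠ p.2} => dist (x p.1.1) (x p.1.2)) := by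
    funext x; exact sep_eq_inf' hN x
  rw [this]
  exact Continuous.finset_inf'_apply _ fun p _ =>
    (continuous_apply p.1.1).dist (continuous_apply p.1.2)

/-- Pairs of indices realizing the separation distance. -/
noncomputable def minPairs (x : Fin N → A) : Finset {p : Fin N × Fin N // p.1 ≠ p.2} :=
  Finset.univ.filter (fun p => dist (x p.1.1) (x p.1.2) = sep x)

end Aux

theorem stmt_1 {A : Type*} [MetricSpace A] [CompactSpace A] [Infinite A] (N : ℕ) (hN : 2 ≤ N) :
    ∃ x : Fin N → A, Function.Injective x ∧ sep x = packDist (Set.univ : Set A) N ∧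
      mesh (Set.univ : Set A) x ≤ sep x ∧ mesh (Set.univ : Set A) x / sep x ≤ 1 := by
  classical
  haveI : Nonempty A := inferInstance
  haveI : Nonempty (Fin N) := ⟨⟨0, by omega⟩⟩
  -- an injective configuration exists
  set P : (Fin N → A) → Prop := fun x => Function.Injective x ∧ ∀ i, x i ∈ (Set.univ : Set A)
    with hP
  obtain ⟨x₀, hx₀⟩ : ∃ x₀ : Fin N → A, Function.Injective x₀ := by
    exact ⟨fun i => Infinite.natEmbedding A i.1,
      fun i j h => Fin.ext (by simpa using (Infinite.natEmbedding A).injective h)⟩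
  haveI : Nonempty {x : Fin N → A // P x} := ⟨⟨x₀, hx₀, fun _ => trivial⟩⟩
  -- maximizer of sep over all configurations
  obtain ⟨xm, -, hxm⟩ := isCompact_univ.exists_isMaxOn (Set.univ_nonempty)
    ((sep_continuous (A := A) hN).continuousOn)
  have hxm : ∀ z : Fin N → A, z ∈ (Set.univ : Set (Fin N → A)) → sep z ≤ sep xm :=
    fun z hz => hxm hz
  have hbdd : BddAbove (Set.range fun z : {x : Fin N → A // P x} => sep z.1) := by
    refine ⟨sep xm, ?_⟩
    rintro _ ⟨z, rfl⟩
    exact hxm z.1 trivial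
  have hle_pack : ∀ x : Fin N → A, P x → sep x ≤ packDist (Set.univ : Set A) N := by
    intro x hx
    exact le_ciSup hbdd (⟨x, hx⟩ : {x : Fin N → A // P x})
  have hpack_le : packDist (Set.univ : Set A) N ≤ sep xm :=
    ciSup_le fun z => hxm z.1 trivial
  -- maximizer is injective
  have hxm_inj : Function.Injective xm := by
    intro i j hij
    by_contra hne
    have h1 : sep xm ≤ 0 := by
      have := sep_le_dist xm hne
      rwa [hij, dist_self] at this
    have h2 : 0 < sep x₀ := sep_pos hN hx₀
    exact absurd (hxm x₀ trivial) (by linarith)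
  have hxm_pack : sep xm = packDist (Set.univ : Set A) N :=
    le_antisymm (hle_pack xm ⟨hxm_inj, fun _ => trivial⟩) hpack_le
  -- the set of cardinalities of minPairs over best-packing configurations
  set T : Set ℕ := {n | ∃ x : Fin N → A, Function.Injective x ∧
      sep x = packDist (Set.univ : Set A) N ∧ (minPairs x).card = n} with hT
  have hTne : T.Nonempty := ⟨(minPairs xm).card, xm, hxm_inj, hxm_pack, rfl⟩
  obtain ⟨x, hx_inj, hx_pack, hx_card⟩ := Nat.sInf_mem hTne
  have hx_pos : 0 < sep x := sep_pos hN hx_inj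
  -- key claim: every point of A is within sep x of some x i
  have key : ∀ y : A, ∃ i, dist y (x i) ≤ sep x := by
    intro y
    by_contra hcon
    push_neg at hcon
    -- swap argument: replace one endpoint of a minimal pair with y
    obtain ⟨j, k, hjk, hjk_eq⟩ := exists_sep_eq hN x
    set x' : Fin N → A := Function.update x j y with hx'
    have hx'j : x' j = y := Function.update_self j y x
    have hx'ne : ∀ i, i ≠ j → x' i = x i := fun i hi => Function.update_of_ne hi y x
    have hy_ne : ∀ i, y ≠ x i := by
      intro i he
      have := hcon i
      rw [← he, dist_self] at this
      linarith
    have hx'_inj : Function.Injective x' := by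
      intro a b hab
      by_contra hne
      rcases eq_or_ne a j with rfl | ha
      · rw [hx'j, hx'ne b (Ne.symm hne)] at hab
        exact hy_ne b hab
      · rcases eq_or_ne b j with rfl | hb
        · rw [hx'j, hx'ne a ha] at hab
          exact hy_ne a hab.symm
        · rw [hx'ne a ha, hx'ne b hb] at hab
          exact hne (hx_inj hab)
    have hsep_ge : sep x ≤ sep x' := by
      refine le_sep hN fun a b hab => ?_
      rcases eq_or_ne a j with rfl | ha
      · rw [hx'j, hx'ne b (Ne.symm hab)]
        exact (hcon b).le.trans (by rw [dist_comm])
      · rcases eq_or_ne b j with rfl | hb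
        · rw [hx'j, hx'ne a ha, dist_comm]
          exact (hcon a).le.trans (by rw [dist_comm])
        · rw [hx'ne a ha, hx'ne b hb]
          exact sep_le_dist x hab
    have hsep_eq : sep x' = sep x := by
      refine le_antisymm ?_ hsep_ge
      rw [hx_pack]
      exact hle_pack x' ⟨hx'_inj, fun _ => trivial⟩
    -- minPairs x' ⊊ minPairs x
    have hdist_j : ∀ i, i ≠ j → sep x < dist (x' j) (x' i) := by
      intro i hi
      rw [hx'j, hx'ne i hi]
      exact hcon i
    have hsub : minPairs x' ⊆ minPairs x := by
      intro p hp
      simp only [minPairs, Finset.mem_filter, Finset.mem_univ, true_and] at hp ⊢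
      have hp1 : p.1.1 ≠ j := by
        intro he
        have := hdist_j p.1.2 (he ▸ Ne.symm p.2)
        rw [← he, hp, hsep_eq] at this
        exact lt_irrefl _ this
      have hp2 : p.1.2 ≠ j := by
        intro he
        have := hdist_j p.1.1 (he ▸ p.2)
        rw [dist_comm, ← he, hp, hsep_eq] at this
        exact lt_irrefl _ this
      rw [hx'ne _ hp1, hx'ne _ hp2, hsep_eq] at hp
      exact hp
    have hmem : (⟨(j, k), hjk⟩ : {p : Fin N × Fin N // p.1 ≠ p.2}) ∈ minPairs x := by
      simp only [minPairs, Finset.mem_filter, Finset.mem_univ, true_and]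
      exact hjk_eq
    have hnmem : (⟨(j, k), hjk⟩ : {p : Fin N × Fin N // p.1 ≠ p.2}) ∉ minPairs x' := by
      simp only [minPairs, Finset.mem_filter, Finset.mem_univ, true_and]
      intro he
      have := hdist_j k (Ne.symm hjk)
      rw [he, hsep_eq] at this
      exact lt_irrefl _ this
    have hcard : (minPairs x').card < (minPairs x).card :=
      Finset.card_lt_card ⟨hsub, fun hsub' => hnmem (hsub' hmem)⟩
    have : (minPairs x').card ∈ T := ⟨x', hx'_inj, hsep_eq.trans hx_pack, rfl⟩
    have := Nat.sInf_le this
    omega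
  -- conclude: mesh ≤ sep
  haveI : Nonempty (Set.univ : Set A) := ⟨⟨Classical.arbitrary A, trivial⟩⟩
  have hmesh : mesh (Set.univ : Set A) x ≤ sep x := by
    refine ciSup_le fun y => ?_
    obtain ⟨i, hi⟩ := key y.1
    exact (ciInf_le (Finite.bddBelow_range _) i).trans hi
  exact ⟨x, hx_inj, hx_pack, hmesh, (div_le_one hx_pos).2 hmesh⟩
end

section
/- Let (A, ρ) be a compact infinite metric space and β ∈ (0,1) such that for every x ∈ A and every r ∈ (0, diam(A)], the annulus B(x, r) \ B(x, βr) is nonempty. Then for every N-point configuration ω_N ⊂ A with N ≥ 2, γ(ω_N, A) ≥ β/2. -/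
open scoped BigOperators
open Filter Metric

theorem stmt_3 {A : Type*} [MetricSpace A] [CompactSpace A] [Infinite A]
    (β : ℝ) (hβ : β ∈ Set.Ioo (0 : ℝ) 1)
    (hann : ∀ x : A, ∀ r : ℝ, 0 < r → r ≤ Metric.diam (Set.univ : Set A) →
      ∃ y : A, dist y x ≤ r ∧ β * r < dist y x)
    (N : ℕ) (hN : 2 ≤ N) (x : Fin N → A) (hx : Function.Injective x) :
    β / 2 ≤ mesh (Set.univ : Set A) x / sep x := by
  obtain ⟨hβ0, hβ1⟩ := hβ
  set i0 : Fin N := ⟨0, by omega⟩ with hi0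
  set i1 : Fin N := ⟨1, by omega⟩ with hi1
  have hne : i0 ≠ i1 := by simp [hi0, hi1, Fin.ext_iff]
  haveI : Nonempty {p : Fin N × Fin N // p.1 ≠ p.2} := ⟨⟨(i0, i1), hne⟩⟩
  have hbdd : BddBelow (Set.range fun p : {p : Fin N × Fin N // p.1 ≠ p.2} =>
      dist (x p.1.1) (x p.1.2)) := ⟨0, by rintro _ ⟨p, rfl⟩; exact dist_nonneg⟩
  have hsep_le : ∀ i j, i ≠ j → sep x ≤ dist (x i) (x j) := fun i j h =>
    ciInf_le hbdd ⟨(i, j), h⟩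
  have hpos : 0 < sep x := by
    obtain ⟨p, hp⟩ := Finite.exists_min
      (fun p : {p : Fin N × Fin N // p.1 ≠ p.2} => dist (x p.1.1) (x p.1.2))
    have heq : sep x = dist (x p.1.1) (x p.1.2) :=
      le_antisymm (ciInf_le hbdd p) (le_ciInf hp)
    rw [heq]
    exact dist_pos.2 fun h => p.2 (hx h)
  set δ := sep x with hδ
  set r : ℝ := δ / (1 + β) with hr
  have h1β : (0:ℝ) < 1 + β := by linarith
  have hrpos : 0 < r := div_pos hpos h1β
  have hdiam : δ ≤ Metric.diam (Set.univ : Set A) :=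
    (hsep_le i0 i1 hne).trans (dist_le_diam_of_mem isCompact_univ.isBounded trivial trivial)
  have hrdiam : r ≤ Metric.diam (Set.univ : Set A) :=
    le_trans (div_le_self hpos.le (by linarith)) hdiam
  haveI : Nonempty (Fin N) := ⟨i0⟩
  obtain ⟨y, hy1, hy2⟩ := hann (x i0) r hrpos hrdiam
  have hreq : δ - r = β * r := by
    rw [hr]; field_simp; ring
  have hinf : β * r ≤ ⨅ i, dist y (x i) := by
    apply le_ciInf
    intro i
    by_cases h : i = i0
    · rw [h]; exact hy2.le
    · have h1 : δ ≤ dist (x i0) (x i) := hsep_le i0 i (Ne.symm h)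
      have h2 : dist (x i0) (x i) ≤ dist (x i0) y + dist y (x i) := dist_triangle _ _ _
      rw [dist_comm] at hy1
      linarith
  have hmeshbdd : BddAbove (Set.range fun y : (Set.univ : Set A) =>
      ⨅ i, dist (y : A) (x i)) := by
    refine ⟨Metric.diam (Set.univ : Set A), ?_⟩
    rintro _ ⟨z, rfl⟩
    exact (ciInf_le ⟨0, by rintro _ ⟨i, rfl⟩; exact dist_nonneg⟩ i0).trans
      (dist_le_diam_of_mem isCompact_univ.isBounded trivial trivial)
  have hmesh : β * r ≤ mesh (Set.univ : Set A) x :=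
    hinf.trans (le_ciSup hmeshbdd ⟨y, trivial⟩)
  rw [le_div_iff₀ hpos]
  have : β / 2 * δ ≤ β * r := by
    rw [hr]
    rw [div_le_iff₀ h1β] at *
    nlinarith
  linarith
end

section
/- For each fixed N ≥ 2 and s > 0, if ω_{N,s} is an N-point s-energy minimizing configuration on a compact infinite metric space (A, ρ), then η(ω_{N,s}, A) ≤ N^{2/s} · δ(ω_{N,s}). -/
open scoped BigOperators
open Filter Metric

lemma finset_erase_comm' {α : Type*} [DecidableEq α] (s : Finset α) (a b : α) :
    (s.erase a).erase b = (s.erase b).erase a := by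
  ext c; simp [Finset.mem_erase]; tauto

/-- Splitting the energy along a distinguished index `j`. -/
lemma energy_split {A : Type*} [MetricSpace A] {N : ℕ} (s : ℝ) (z : Fin N → A) (j : Fin N) :
    energy s z =
      (∑ i ∈ Finset.univ.erase j, ∑ l ∈ (Finset.univ.erase j).erase i,
        dist (z i) (z l) ^ (-s)) +
      2 * ∑ i ∈ Finset.univ.erase j, dist (z j) (z i) ^ (-s) := by
  unfold energy
  have hfilter : ∀ i : Fin N, Finset.univ.filter (· ≠ i) = Finset.univ.erase i := fun i =>
    Finset.filter_ne' _ i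
  simp only [hfilter]
  rw [← Finset.sum_erase_add _ _ (Finset.mem_univ j)]
  have h1 : ∀ i ∈ Finset.univ.erase j,
      ∑ l ∈ Finset.univ.erase i, dist (z i) (z l) ^ (-s)
      = dist (z j) (z i) ^ (-s) +
        ∑ l ∈ (Finset.univ.erase j).erase i, dist (z i) (z l) ^ (-s) := by
    intro i hi
    have hij : i ≠ j := (Finset.mem_erase.1 hi).1
    have hj : j ∈ Finset.univ.erase i := Finset.mem_erase.2 ⟨fun h => hij h.symm, Finset.mem_univ _⟩
    rw [← Finset.add_sum_erase _ _ hj, dist_comm (z i) (z j), finset_erase_comm']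
  rw [Finset.sum_congr rfl h1, Finset.sum_add_distrib]
  ring

theorem stmt_4 {A : Type*} [MetricSpace A] [CompactSpace A] [Infinite A]
    (N : ℕ) (hN : 2 ≤ N) (s : ℝ) (hs : 0 < s) (x : Fin N → A) (hx : Function.Injective x)
    (hmin : energy s x = minEnergy (Set.univ : Set A) N s) :
    mesh (Set.univ : Set A) x ≤ (N : ℝ) ^ (2 / s) * sep x := by
  classical
  -- basic index facts
  have hNpos : 0 < N := by omega
  haveI : Nonempty (Fin N) := ⟨⟨0, hNpos⟩⟩
  have hne01 : (⟨0, by omega⟩ : Fin N) ≠ ⟨1, by omega⟩ := by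
    intro h; exact absurd (congrArg Fin.val h) (by simp)
  haveI hPne : Nonempty {p : Fin N × Fin N // p.1 ≠ p.2} := ⟨⟨(⟨0, by omega⟩, ⟨1, by omega⟩), hne01⟩⟩
  -- separation distance is attained and positive
  have hbddP : BddBelow (Set.range fun p : {p : Fin N × Fin N // p.1 ≠ p.2} =>
      dist (x p.1.1) (x p.1.2)) := ⟨0, by rintro _ ⟨p, rfl⟩; exact dist_nonneg⟩
  obtain ⟨p₀, hp₀⟩ := Finite.exists_min
    (fun p : {p : Fin N × Fin N // p.1 ≠ p.2} => dist (x p.1.1) (x p.1.2))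
  have hsep_eq : sep x = dist (x p₀.1.1) (x p₀.1.2) :=
    le_antisymm (ciInf_le hbddP p₀) (le_ciInf hp₀)
  set j : Fin N := p₀.1.1 with hj
  set k : Fin N := p₀.1.2 with hk
  have hjk : j ≠ k := p₀.2
  have hδpos : 0 < sep x := by
    rw [hsep_eq]; exact dist_pos.2 fun h => hjk (hx h)
  set δ : ℝ := sep x with hδ
  -- it suffices to bound each `⨅ i, dist y (x i)`
  haveI : Nonempty (Set.univ : Set A) := ⟨⟨Classical.arbitrary A, trivial⟩⟩
  have hRHSnonneg : 0 ≤ (N : ℝ) ^ (2 / s) * δ :=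
    mul_nonneg (Real.rpow_nonneg (Nat.cast_nonneg N) _) hδpos.le
  refine ciSup_le fun y => ?_
  set t : ℝ := ⨅ i, dist (y : A) (x i) with ht
  by_cases htpos : 0 < t
  swap
  · exact le_trans (not_lt.1 htpos) hRHSnonneg
  -- every point of `x` is at distance ≥ t from y, and y avoids all x i
  have hbddI : BddBelow (Set.range fun i : Fin N => dist (y : A) (x i)) :=
    ⟨0, by rintro _ ⟨i, rfl⟩; exact dist_nonneg⟩
  have htle : ∀ i, t ≤ dist (y : A) (x i) := fun i => ciInf_le hbddI i
  have hyne : ∀ i, (y : A) ≠ x i := by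
    intro i h
    have := htle i
    rw [h, dist_self] at this
    exact absurd (lt_of_lt_of_le htpos this) (lt_irrefl _)
  -- the modified configuration
  set x' : Fin N → A := Function.update x j (y : A) with hx'
  have hx'j : x' j = (y : A) := Function.update_self _ _ _
  have hx'ne : ∀ i, i ≠ j → x' i = x i := fun i hi => Function.update_of_ne hi _ _
  have hinj' : Function.Injective x' := by
    intro a b hab
    by_cases ha : a = j <;> by_cases hb : b = j
    · rw [ha, hb]
    · rw [ha, hx'j, hx'ne b hb] at hab; exact absurd hab (hyne b)
    · rw [hb, hx'j, hx'ne a ha] at hab; exact absurd hab.symm (hyne a)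
    · rw [hx'ne a ha, hx'ne b hb] at hab; exact hx hab
  -- minimality gives energy comparison
  have hbddE : BddBelow (Set.range fun z : {z : Fin N → A //
      Function.Injective z ∧ ∀ i, z i ∈ (Set.univ : Set A)} => energy s z.1) := by
    refine ⟨0, ?_⟩
    rintro _ ⟨z, rfl⟩
    exact Finset.sum_nonneg fun i _ => Finset.sum_nonneg fun l _ =>
      Real.rpow_nonneg dist_nonneg _
  have hEle : energy s x ≤ energy s x' := by
    rw [hmin]
    exact ciInf_le hbddE ⟨x', hinj', fun i => trivial⟩
  -- compare the two energy splittings at `j`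
  have hsplit := energy_split s x j
  have hsplit' := energy_split s x' j
  have hRsame : (∑ i ∈ Finset.univ.erase j, ∑ l ∈ (Finset.univ.erase j).erase i,
        dist (x' i) (x' l) ^ (-s))
      = ∑ i ∈ Finset.univ.erase j, ∑ l ∈ (Finset.univ.erase j).erase i,
        dist (x i) (x l) ^ (-s) := by
    refine Finset.sum_congr rfl fun i hi => Finset.sum_congr rfl fun l hl => ?_
    have hlj : l ≠ j := (Finset.mem_erase.1 (Finset.mem_of_mem_erase hl)).1
    rw [hx'ne i (Finset.mem_erase.1 hi).1, hx'ne l hlj]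
  have hSle : (∑ i ∈ Finset.univ.erase j, dist (x j) (x i) ^ (-s))
      ≤ ∑ i ∈ Finset.univ.erase j, dist ((y : A)) (x i) ^ (-s) := by
    have h2 : (∑ i ∈ Finset.univ.erase j, dist (x' j) (x' i) ^ (-s))
        = ∑ i ∈ Finset.univ.erase j, dist ((y : A)) (x i) ^ (-s) := by
      refine Finset.sum_congr rfl fun i hi => ?_
      rw [hx'j, hx'ne i (Finset.mem_erase.1 hi).1]
    rw [hsplit, hsplit', hRsame, h2] at hEle
    linarith
  -- lower bound the left sum by the closest pair term
  have hkmem : k ∈ Finset.univ.erase j := Finset.mem_erase.2 ⟨fun h => hjk h.symm, Finset.mem_univ _⟩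
  have hlow : δ ^ (-s) ≤ ∑ i ∈ Finset.univ.erase j, dist (x j) (x i) ^ (-s) := by
    have := Finset.single_le_sum (f := fun i => dist (x j) (x i) ^ (-s))
      (fun i _ => Real.rpow_nonneg dist_nonneg _) hkmem
    rw [hsep_eq]; exact this
  -- upper bound the right sum
  have hup : (∑ i ∈ Finset.univ.erase j, dist ((y : A)) (x i) ^ (-s))
      ≤ (N - 1 : ℕ) * t ^ (-s) := by
    have := Finset.sum_le_card_nsmul (Finset.univ.erase j)
      (fun i => dist ((y : A)) (x i) ^ (-s)) (t ^ (-s))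
      (fun i _ => Real.rpow_le_rpow_of_nonpos htpos (htle i) (neg_nonpos.2 hs.le))
    rwa [Finset.card_erase_of_mem (Finset.mem_univ j), Finset.card_univ, Fintype.card_fin,
      nsmul_eq_mul] at this
  have hkey : δ ^ (-s) ≤ (N - 1 : ℕ) * t ^ (-s) := le_trans hlow (le_trans hSle hup)
  -- turn the inequality around : t ^ s ≤ (N-1) * δ ^ s
  have hδs : (0:ℝ) < δ ^ s := Real.rpow_pos_of_pos hδpos s
  have hts : (0:ℝ) < t ^ s := Real.rpow_pos_of_pos htpos s
  have hc1 : (1:ℝ) ≤ (N - 1 : ℕ) := by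
    have : 1 ≤ N - 1 := by omega
    exact_mod_cast this
  have hkey' : (δ ^ s)⁻¹ ≤ (N - 1 : ℕ) * (t ^ s)⁻¹ := by
    rw [← Real.rpow_neg hδpos.le, ← Real.rpow_neg htpos.le]; exact hkey
  have hts_le : t ^ s ≤ (N - 1 : ℕ) * δ ^ s := by
    have h := mul_le_mul_of_nonneg_left hkey' (mul_pos hδs hts).le
    calc t ^ s = δ ^ s * t ^ s * (δ ^ s)⁻¹ := by field_simp
    _ ≤ δ ^ s * t ^ s * ((N - 1 : ℕ) * (t ^ s)⁻¹) := h
    _ = (N - 1 : ℕ) * δ ^ s := by field_simp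
  -- compare with N ^ 2
  have hNsq : ((N - 1 : ℕ) : ℝ) ≤ (N : ℝ) ^ (2:ℕ) := by
    have : N - 1 ≤ N ^ 2 := by nlinarith [Nat.sub_le N 1]
    exact_mod_cast this
  have hts_le2 : t ^ s ≤ ((N : ℝ) ^ (2 / s) * δ) ^ s := by
    have hrw : ((N : ℝ) ^ (2 / s) * δ) ^ s = (N : ℝ) ^ (2:ℕ) * δ ^ s := by
      rw [Real.mul_rpow (Real.rpow_nonneg (Nat.cast_nonneg N) _) hδpos.le,
        ← Real.rpow_natCast (N : ℝ) 2, ← Real.rpow_mul (Nat.cast_nonneg N),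
        div_mul_cancel₀ _ (ne_of_gt hs)]
      norm_num
    rw [hrw]
    exact le_trans hts_le (mul_le_mul_of_nonneg_right hNsq hδs.le)
  -- conclude via strict monotonicity of rpow
  by_contra hcon
  push_neg at hcon
  have : ((N : ℝ) ^ (2 / s) * δ) ^ s < t ^ s :=
    Real.rpow_lt_rpow hRHSnonneg hcon hs
  exact absurd (lt_of_lt_of_le this hts_le2) (lt_irrefl _)
end

section
/- For each fixed N ≥ 2 on a compact infinite metric space (A, ρ), lim_{s→∞} E_s(A, N)^{1/s} = 1/δ_N(A), where E_s(A,N) is the minimal N-point Riesz s-energy of A and δ_N(A) is the N-point best-packing distance. -/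
open scoped BigOperators
open Filter Metric

namespace StmtAux

variable {E : Type*} [MetricSpace E] {N : ℕ}

lemma pair_nonempty (hN : 2 ≤ N) : Nonempty {p : Fin N × Fin N // p.1 ≠ p.2} :=
  ⟨⟨(⟨0, by omega⟩, ⟨1, by omega⟩), by simp [Prod.ext_iff, Fin.ext_iff]⟩⟩

lemma sep_le (x : Fin N → E) (p : {p : Fin N × Fin N // p.1 ≠ p.2}) :
    sep x ≤ dist (x p.1.1) (x p.1.2) := by
  apply ciInf_le ⟨0, ?_⟩
  rintro y ⟨q, rfl⟩; exact dist_nonneg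

lemma le_sep (hN : 2 ≤ N) {x : Fin N → E} {c : ℝ}
    (h : ∀ p : {p : Fin N × Fin N // p.1 ≠ p.2}, c ≤ dist (x p.1.1) (x p.1.2)) :
    c ≤ sep x := by
  haveI := pair_nonempty (N := N) hN
  exact le_ciInf h

lemma exists_sep_eq (hN : 2 ≤ N) (x : Fin N → E) :
    ∃ p : {p : Fin N × Fin N // p.1 ≠ p.2}, dist (x p.1.1) (x p.1.2) = sep x := by
  haveI := pair_nonempty (N := N) hN
  exact exists_eq_ciInf_of_finite

lemma sep_pos (hN : 2 ≤ N) {x : Fin N → E} (hx : Function.Injective x) : 0 < sep x := by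
  obtain ⟨p, hp⟩ := exists_sep_eq hN x
  rw [← hp]
  exact dist_pos.2 fun h => p.2 (hx h)

lemma continuous_sep (hN : 2 ≤ N) : Continuous (sep : (Fin N → E) → ℝ) := by
  haveI := pair_nonempty (N := N) hN
  have : (sep : (Fin N → E) → ℝ) = fun x =>
      Finset.univ.inf' Finset.univ_nonempty
        (fun p : {p : Fin N × Fin N // p.1 ≠ p.2} => dist (x p.1.1) (x p.1.2)) := by
    funext x
    apply le_antisymm
    · obtain ⟨p, _, hpv⟩ := Finset.exists_mem_eq_inf' (Finset.univ_nonempty)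
        (fun p : {p : Fin N × Fin N // p.1 ≠ p.2} => dist (x p.1.1) (x p.1.2))
      rw [hpv]
      exact sep_le x p
    · apply le_sep hN
      intro p
      exact Finset.inf'_le _ (Finset.mem_univ p)
  rw [this]
  apply Continuous.finset_inf'_apply
  intro p _
  exact (continuous_apply _).dist (continuous_apply _)

variable (E N) in
/-- The configuration space. -/
abbrev Conf : Type _ := {x : Fin N → E // Function.Injective x ∧ ∀ i, x i ∈ (Set.univ : Set E)}

lemma conf_nonempty [Infinite E] : Nonempty (Conf E N) := by
  refine ⟨⟨fun i => Infinite.natEmbedding E i, ?_, fun _ => trivial⟩⟩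
  intro i j h
  exact Fin.val_injective ((Infinite.natEmbedding E).injective h)

lemma exists_pack [CompactSpace E] [Infinite E] (hN : 2 ≤ N) :
    ∃ x : Conf E N, sep x.1 = packDist (Set.univ : Set E) N ∧ 0 < sep x.1 := by
  obtain ⟨x₀⟩ := conf_nonempty (E := E) (N := N)
  obtain ⟨x, -, hx⟩ := isCompact_univ.exists_isMaxOn (Set.univ_nonempty)
    ((continuous_sep (E := E) hN).continuousOn)
  have hx : ∀ y : Fin N → E, sep y ≤ sep x := fun y => hx (Set.mem_univ y)
  have hpos : 0 < sep x := lt_of_lt_of_le (sep_pos hN x₀.2.1) (hx x₀.1)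
  have hinj : Function.Injective x := by
    intro i j hij
    by_contra hne
    have : sep x ≤ dist (x i) (x j) := sep_le x ⟨(i, j), hne⟩
    rw [hij, dist_self] at this
    exact absurd (lt_of_lt_of_le hpos this) (lt_irrefl _)
  refine ⟨⟨x, hinj, fun _ => trivial⟩, le_antisymm ?_ ?_, hpos⟩
  · exact le_ciSup ⟨sep x, by rintro v ⟨y, rfl⟩; exact hx y.1⟩ (⟨x, hinj, fun _ => trivial⟩ : Conf E N)
  · haveI : Nonempty (Conf E N) := ⟨x₀⟩
    exact ciSup_le fun y => hx y.1

lemma energy_nonneg (s : ℝ) (x : Fin N → E) : 0 ≤ energy s x := by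
  apply Finset.sum_nonneg; intro i _
  apply Finset.sum_nonneg; intro j _
  exact Real.rpow_nonneg dist_nonneg _

lemma sep_le_pack [CompactSpace E] [Infinite E] (hN : 2 ≤ N) (y : Conf E N) :
    sep y.1 ≤ packDist (Set.univ : Set E) N := by
  obtain ⟨x, -, hx⟩ := isCompact_univ.exists_isMaxOn (Set.univ_nonempty)
    ((continuous_sep (E := E) (N := N) hN).continuousOn)
  refine le_ciSup (f := fun z : Conf E N => sep z.1) ⟨sep x, ?_⟩ y
  rintro v ⟨z, rfl⟩
  exact hx (Set.mem_univ z.1)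

lemma single_le_energy (x : Fin N → E) (s : ℝ) (p : {p : Fin N × Fin N // p.1 ≠ p.2}) :
    dist (x p.1.1) (x p.1.2) ^ (-s) ≤ energy s x := by
  have h1 : dist (x p.1.1) (x p.1.2) ^ (-s)
      ≤ ∑ j ∈ Finset.univ.filter (· ≠ p.1.1), dist (x p.1.1) (x j) ^ (-s) := by
    refine Finset.single_le_sum (f := fun j => dist (x p.1.1) (x j) ^ (-s))
      (fun j _ => Real.rpow_nonneg dist_nonneg _) ?_
    simp [Ne.symm p.2]
  refine h1.trans ?_
  unfold energy
  exact Finset.single_le_sum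
    (f := fun i => ∑ j ∈ Finset.univ.filter (· ≠ i), dist (x i) (x j) ^ (-s))
    (fun i _ => Finset.sum_nonneg fun j _ => Real.rpow_nonneg dist_nonneg _)
    (Finset.mem_univ p.1.1)

lemma packDist_pos [CompactSpace E] [Infinite E] (hN : 2 ≤ N) :
    0 < packDist (Set.univ : Set E) N := by
  obtain ⟨x, he, hp⟩ := exists_pack (E := E) hN
  exact he ▸ hp

lemma minEnergy_ge [CompactSpace E] [Infinite E] (hN : 2 ≤ N) {s : ℝ} (hs : 0 ≤ s) :
    (packDist (Set.univ : Set E) N) ^ (-s) ≤ minEnergy (Set.univ : Set E) N s := by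
  haveI := conf_nonempty (E := E) (N := N)
  apply le_ciInf
  intro y
  obtain ⟨p, hp⟩ := exists_sep_eq hN y.1
  refine le_trans ?_ (single_le_energy y.1 s p)
  refine Real.rpow_le_rpow_of_nonpos ?_ ?_ (neg_nonpos.2 hs)
  · exact dist_pos.2 fun h => p.2 (y.2.1 h)
  · rw [hp]; exact sep_le_pack hN y

lemma minEnergy_le [CompactSpace E] [Infinite E] (hN : 2 ≤ N) {s : ℝ} (hs : 0 ≤ s) :
    minEnergy (Set.univ : Set E) N s
      ≤ (N : ℝ) ^ 2 * (packDist (Set.univ : Set E) N) ^ (-s) := by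
  obtain ⟨x, hxe, hxp⟩ := exists_pack (E := E) hN
  have h0 : minEnergy (Set.univ : Set E) N s ≤ energy s x.1 :=
    ciInf_le ⟨0, by rintro v ⟨y, rfl⟩; exact energy_nonneg _ _⟩ x
  refine h0.trans ?_
  have hpos := packDist_pos (E := E) hN
  have hterm : ∀ i j : Fin N, j ≠ i →
      dist (x.1 i) (x.1 j) ^ (-s) ≤ (packDist (Set.univ : Set E) N) ^ (-s) := by
    intro i j hij
    refine Real.rpow_le_rpow_of_nonpos hpos ?_ (neg_nonpos.2 hs)
    rw [← hxe]
    exact sep_le x.1 ⟨(i, j), Ne.symm hij⟩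
  have hc : 0 ≤ (packDist (Set.univ : Set E) N) ^ (-s) := Real.rpow_nonneg hpos.le _
  calc energy s x.1
      ≤ ∑ _i : Fin N, (N : ℝ) * (packDist (Set.univ : Set E) N) ^ (-s) := by
        refine Finset.sum_le_sum fun i _ => ?_
        calc ∑ j ∈ Finset.univ.filter (· ≠ i), dist (x.1 i) (x.1 j) ^ (-s)
            ≤ ∑ _j ∈ Finset.univ.filter (· ≠ i),
                (packDist (Set.univ : Set E) N) ^ (-s) := by
              refine Finset.sum_le_sum fun j hj => ?_
              exact hterm i j (by simpa using (Finset.mem_filter.1 hj).2)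
          _ = (Finset.univ.filter (· ≠ i)).card
                * (packDist (Set.univ : Set E) N) ^ (-s) := by
              rw [Finset.sum_const, nsmul_eq_mul]
          _ ≤ (N : ℝ) * (packDist (Set.univ : Set E) N) ^ (-s) := by
              refine mul_le_mul_of_nonneg_right ?_ hc
              exact_mod_cast (Finset.card_filter_le _ _).trans (by simp)
    _ = (N : ℝ) ^ 2 * (packDist (Set.univ : Set E) N) ^ (-s) := by
        rw [Finset.sum_const, nsmul_eq_mul, Finset.card_univ, Fintype.card_fin]
        ring

end StmtAux

theorem stmt_6 {A : Type*} [MetricSpace A] [CompactSpace A] [Infinite A]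
    (N : ℕ) (hN : 2 ≤ N) :
    Filter.Tendsto (fun s : ℝ => (minEnergy (Set.univ : Set A) N s) ^ (1 / s))
      Filter.atTop (nhds (1 / packDist (Set.univ : Set A) N)) := by
  set δ := packDist (Set.univ : Set A) N with hδdef
  have hδ : 0 < δ := StmtAux.packDist_pos hN
  have hC : (0 : ℝ) < (N : ℝ) ^ 2 := by positivity
  -- upper comparison function
  have hg : Filter.Tendsto (fun s : ℝ => ((N : ℝ) ^ 2) ^ (1 / s) * (1 / δ))
      Filter.atTop (nhds (1 / δ)) := by
    have h1 : Filter.Tendsto (fun s : ℝ => ((N : ℝ) ^ 2) ^ (1 / s))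
        Filter.atTop (nhds 1) := by
      have hc : ContinuousAt (fun t : ℝ => ((N : ℝ) ^ 2) ^ t) 0 :=
        Real.continuousAt_const_rpow (ne_of_gt hC)
      have h2 : Filter.Tendsto (fun s : ℝ => 1 / s) Filter.atTop (nhds 0) := by
        simpa only [one_div] using tendsto_inv_atTop_zero
      simpa [Function.comp_def] using hc.tendsto.comp h2
    have := h1.mul (tendsto_const_nhds (x := 1 / δ))
    simpa using this
  refine tendsto_of_tendsto_of_tendsto_of_le_of_le' tendsto_const_nhds hg ?_ ?_
  · filter_upwards [Filter.eventually_ge_atTop (1 : ℝ)] with s hs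
    have hs0 : (0 : ℝ) < s := lt_of_lt_of_le one_pos hs
    have hlo : δ ^ (-s) ≤ minEnergy (Set.univ : Set A) N s :=
      StmtAux.minEnergy_ge hN hs0.le
    have : (δ ^ (-s)) ^ (1 / s) ≤ (minEnergy (Set.univ : Set A) N s) ^ (1 / s) :=
      Real.rpow_le_rpow (Real.rpow_nonneg hδ.le _) hlo (by positivity)
    refine le_trans (le_of_eq ?_) this
    rw [← Real.rpow_mul hδ.le, show -s * (1 / s) = -1 by field_simp,
      Real.rpow_neg_one, one_div]
  · filter_upwards [Filter.eventually_ge_atTop (1 : ℝ)] with s hs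
    have hs0 : (0 : ℝ) < s := lt_of_lt_of_le one_pos hs
    have hlo : δ ^ (-s) ≤ minEnergy (Set.univ : Set A) N s :=
      StmtAux.minEnergy_ge hN hs0.le
    have hmin0 : 0 ≤ minEnergy (Set.univ : Set A) N s :=
      le_trans (Real.rpow_nonneg hδ.le _) hlo
    have hhi : minEnergy (Set.univ : Set A) N s ≤ (N : ℝ) ^ 2 * δ ^ (-s) :=
      StmtAux.minEnergy_le hN hs0.le
    have h1 : (minEnergy (Set.univ : Set A) N s) ^ (1 / s)
        ≤ ((N : ℝ) ^ 2 * δ ^ (-s)) ^ (1 / s) :=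
      Real.rpow_le_rpow hmin0 hhi (by positivity)
    refine h1.trans (le_of_eq ?_)
    rw [Real.mul_rpow hC.le (Real.rpow_nonneg hδ.le _)]
    congr 1
    rw [← Real.rpow_mul hδ.le, show -s * (1 / s) = -1 by field_simp,
      Real.rpow_neg_one, one_div]
end

section
/- Let A be the standard middle-thirds Cantor set in [0,1] with the Euclidean metric. For every natural number N, the (2^N + 1)-point best-packing distance of A equals 3^{-N}. -/
open scoped BigOperators
open Filter Metric

/-! ### Auxiliary material -/

lemma one_mem_preCantorSet (n : ℕ) : (1 : ℝ) ∈ preCantorSet n := by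
  induction n with
  | zero => simp [preCantorSet]
  | succ n ih => exact Or.inr ⟨1, ih, by norm_num⟩

lemma one_mem_cantorSet : (1 : ℝ) ∈ cantorSet :=
  Set.mem_iInter.mpr one_mem_preCantorSet

lemma div3_mem_cantorSet {x : ℝ} (hx : x ∈ cantorSet) : x / 3 ∈ cantorSet := by
  rw [cantorSet, Set.mem_iInter]
  intro n
  match n with
  | 0 =>
    have h := cantorSet_subset_unitInterval hx
    simp only [preCantorSet_zero, Set.mem_Icc] at h ⊢
    constructor <;> nlinarith [h.1, h.2]
  | n + 1 =>
    exact Or.inl ⟨x, Set.mem_iInter.mp hx n, rfl⟩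

lemma add2_div3_mem_cantorSet {x : ℝ} (hx : x ∈ cantorSet) : (2 + x) / 3 ∈ cantorSet := by
  rw [cantorSet, Set.mem_iInter]
  intro n
  match n with
  | 0 =>
    have h := cantorSet_subset_unitInterval hx
    simp only [preCantorSet_zero, Set.mem_Icc] at h ⊢
    constructor <;> nlinarith [h.1, h.2]
  | n + 1 =>
    exact Or.inr ⟨x, Set.mem_iInter.mp hx n, rfl⟩

/-- Left endpoints of the level-`n` Cantor intervals, indexed by `i < 2^n`. -/
noncomputable def cpt : ℕ → ℕ → ℝ
  | 0, _ => 0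
  | n+1, i => if i < 2^n then cpt n i / 3 else (2 + cpt n (i - 2^n)) / 3

lemma cpt_nonneg (n i : ℕ) : 0 ≤ cpt n i := by
  induction n generalizing i with
  | zero => simp [cpt]
  | succ n ih =>
    simp only [cpt]
    split_ifs with h
    · have := ih i; linarith
    · have := ih (i - 2^n); linarith

lemma cpt_le (n : ℕ) : ∀ i, i < 2^n → cpt n i ≤ 1 - (1/3)^n := by
  induction n with
  | zero => intro i hi; interval_cases i; simp [cpt]
  | succ n ih =>
    intro i hi
    simp only [cpt]
    split_ifs with h
    · have := ih i h
      rw [pow_succ]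
      nlinarith
    · have h2 : i - 2^n < 2^n := by
        push_neg at h
        have : 2^(n+1) = 2^n + 2^n := by ring
        omega
      have := ih _ h2
      rw [pow_succ]
      nlinarith

lemma cpt_mem (n : ℕ) : ∀ i, i < 2^n → cpt n i ∈ cantorSet := by
  induction n with
  | zero => intro i hi; interval_cases i; simpa [cpt] using zero_mem_cantorSet
  | succ n ih =>
    intro i hi
    simp only [cpt]
    split_ifs with h
    · exact div3_mem_cantorSet (ih i h)
    · have h2 : i - 2^n < 2^n := by
        have : 2^(n+1) = 2^n + 2^n := by ring
        omega
      exact add2_div3_mem_cantorSet (ih _ h2)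

lemma cpt_sep (n : ℕ) : ∀ i j, i < j → j < 2^n → cpt n i + 2 * (1/3)^n ≤ cpt n j := by
  induction n with
  | zero => intro i j hij hj; omega
  | succ n ih =>
    intro i j hij hj
    have hsplit : 2^(n+1) = 2^n + 2^n := by ring
    simp only [cpt]
    rcases lt_or_ge j (2^n) with hjl | hjh
    · have hil : i < 2^n := lt_trans hij hjl
      rw [if_pos hil, if_pos hjl]
      have := ih i j hij hjl
      rw [pow_succ]
      nlinarith
    · rcases lt_or_ge i (2^n) with hil | hih
      · rw [if_pos hil, if_neg (not_lt.mpr hjh)]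
        have h1 := cpt_le n i hil
        have h2 := cpt_nonneg n (j - 2^n)
        have h3 : (0:ℝ) < (1/3:ℝ)^n := by positivity
        have h4 : ((1:ℝ)/3)^n ≤ 1 := by
          apply pow_le_one₀ <;> norm_num
        rw [pow_succ]
        nlinarith
      · rw [if_neg (not_lt.mpr hih), if_neg (not_lt.mpr hjh)]
        have := ih (i - 2^n) (j - 2^n) (by omega) (by omega)
        rw [pow_succ]
        nlinarith

/-- Pigeonhole: more than `2^n` points in `preCantorSet n` contain a pair at distance
`≤ (1/3)^n`. -/
lemma cantor_pigeon (n : ℕ) : ∀ s : Finset ℝ, ↑s ⊆ preCantorSet n → 2^n < s.card →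
    ∃ a ∈ s, ∃ b ∈ s, a ≠ b ∧ |a - b| ≤ (1/3)^n := by
  classical
  induction n with
  | zero =>
    intro s hs hcard
    obtain ⟨a, ha, b, hb, hab⟩ := Finset.one_lt_card.mp (by simpa using hcard)
    refine ⟨a, ha, b, hb, hab, ?_⟩
    have ha' := hs ha
    have hb' := hs hb
    simp only [preCantorSet_zero, Set.mem_Icc] at ha' hb'
    rw [abs_le]
    constructor <;> simp <;> linarith [ha'.1, ha'.2, hb'.1, hb'.2]
  | succ n ih =>
    intro s hs hcard
    set s₁ := s.filter (fun y => 3*y ∈ preCantorSet n) with hs₁def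
    set s₂ := s.filter (fun y => ¬ 3*y ∈ preCantorSet n) with hs₂def
    have hsum : s₁.card + s₂.card = s.card := Finset.card_filter_add_card_filter_not _
    have hsplit : 2^(n+1) = 2^n + 2^n := by ring
    rcases lt_or_ge (2^n) s₁.card with h1 | h1
    · -- left half
      set t := s₁.image (fun y => 3*y) with htdef
      have hinj : Set.InjOn (fun y : ℝ => 3*y) ↑s₁ := fun a _ b _ h => by
        dsimp at h; linarith
      have htcard : t.card = s₁.card := Finset.card_image_of_injOn hinj
      have htsub : ↑t ⊆ preCantorSet n := by
        intro z hz
        simp only [htdef, Finset.coe_image, Set.mem_image] at hz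
        obtain ⟨y, hy, rfl⟩ := hz
        exact (Finset.mem_filter.mp hy).2
      obtain ⟨a, ha, b, hb, hab, habs⟩ := ih t htsub (by omega)
      simp only [htdef, Finset.mem_image] at ha hb
      obtain ⟨a', ha', rfl⟩ := ha
      obtain ⟨b', hb', rfl⟩ := hb
      refine ⟨a', (Finset.mem_filter.mp ha').1, b', (Finset.mem_filter.mp hb').1, ?_, ?_⟩
      · intro h; exact hab (by rw [h])
      · rw [pow_succ]
        have : |3*a' - 3*b'| = 3 * |a' - b'| := by
          rw [show 3*a' - 3*b' = 3*(a'-b') by ring, abs_mul]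
          norm_num
        rw [this] at habs
        linarith
    · -- right half
      have h2 : 2^n < s₂.card := by omega
      set t := s₂.image (fun y => 3*y - 2) with htdef
      have hinj : Set.InjOn (fun y : ℝ => 3*y - 2) ↑s₂ := fun a _ b _ h => by
        dsimp at h; linarith
      have htcard : t.card = s₂.card := Finset.card_image_of_injOn hinj
      have htsub : ↑t ⊆ preCantorSet n := by
        intro z hz
        simp only [htdef, Finset.coe_image, Set.mem_image] at hz
        obtain ⟨y, hy, rfl⟩ := hz
        obtain ⟨hys, hynot⟩ := Finset.mem_filter.mp hy
        have hy' : y ∈ preCantorSet (n+1) := hs hys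
        rcases hy' with ⟨z', hz', hz'eq⟩ | ⟨z', hz', hz'eq⟩
        · exfalso; apply hynot
          have : 3 * y = z' := by dsimp at hz'eq; linarith
          rwa [this]
        · have : 3 * y - 2 = z' := by dsimp at hz'eq; linarith
          rwa [this]
      obtain ⟨a, ha, b, hb, hab, habs⟩ := ih t htsub (by omega)
      simp only [htdef, Finset.mem_image] at ha hb
      obtain ⟨a', ha', rfl⟩ := ha
      obtain ⟨b', hb', rfl⟩ := hb
      refine ⟨a', (Finset.mem_filter.mp ha').1, b', (Finset.mem_filter.mp hb').1, ?_, ?_⟩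
      · intro h; exact hab (by rw [h])
      · rw [pow_succ]
        have : |(3*a' - 2) - (3*b' - 2)| = 3 * |a' - b'| := by
          rw [show (3*a'-2) - (3*b'-2) = 3*(a'-b') by ring, abs_mul]
          norm_num
        rw [this] at habs
        linarith

theorem stmt_7 (N : ℕ) :
    packDist cantorSet (2 ^ N + 1) = ((1 : ℝ) / 3) ^ N := by
  classical
  set M := 2 ^ N + 1 with hM
  -- the good configuration
  set x : Fin M → ℝ := fun i => if (i : ℕ) < 2 ^ N then cpt N i else 1 with hxdef
  have hxmem : ∀ i, x i ∈ cantorSet := by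
    intro i
    simp only [hxdef]
    split_ifs with h
    · exact cpt_mem N i h
    · exact one_mem_cantorSet
  have hsep : ∀ i j : Fin M, (i : ℕ) < (j : ℕ) → x i + (1/3)^N ≤ x j := by
    intro i j hij
    have hj : (j : ℕ) < M := j.isLt
    have h3 : (0:ℝ) < (1/3:ℝ)^N := by positivity
    simp only [hxdef]
    rcases lt_or_ge (j : ℕ) (2^N) with hjl | hjh
    · rw [if_pos (lt_trans hij hjl), if_pos hjl]
      have := cpt_sep N i j hij hjl
      linarith
    · have hil : (i : ℕ) < 2^N := by omega
      rw [if_pos hil, if_neg (not_lt.mpr hjh)]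
      have := cpt_le N i hil
      linarith
  have hsep' : ∀ i j : Fin M, i ≠ j → (1/3:ℝ)^N ≤ dist (x i) (x j) := by
    intro i j hij
    have h3 : (0:ℝ) < (1/3:ℝ)^N := by positivity
    rw [Real.dist_eq]
    rcases lt_trichotomy (i : ℕ) (j : ℕ) with h | h | h
    · have := hsep i j h
      rw [abs_sub_comm, abs_of_nonneg (by linarith)]
      linarith
    · exact absurd (Fin.ext h) hij
    · have := hsep j i h
      rw [abs_of_nonneg (by linarith)]
      linarith
  have hxinj : Function.Injective x := by
    intro i j h
    by_contra hne
    have := hsep' i j hne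
    rw [h, dist_self] at this
    have h3 : (0:ℝ) < (1/3:ℝ)^N := by positivity
    linarith
  set cfg : {x : Fin M → ℝ // Function.Injective x ∧ ∀ i, x i ∈ cantorSet} :=
    ⟨x, hxinj, hxmem⟩ with hcfg
  have h2N : 0 < 2^N := Nat.two_pow_pos N
  haveI : Nonempty {p : Fin M × Fin M // p.1 ≠ p.2} :=
    ⟨⟨(⟨0, by omega⟩, ⟨1, by omega⟩), by simp [Fin.ext_iff]⟩⟩
  haveI : Nonempty {x : Fin M → ℝ // Function.Injective x ∧ ∀ i, x i ∈ cantorSet} := ⟨cfg⟩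
  -- upper bound on sep of any configuration
  have hub : ∀ y : {x : Fin M → ℝ // Function.Injective x ∧ ∀ i, x i ∈ cantorSet},
      sep y.1 ≤ (1/3:ℝ)^N := by
    intro y
    obtain ⟨y, hyinj, hymem⟩ := y
    set s : Finset ℝ := Finset.image y Finset.univ with hsdef
    have hscard : s.card = M := by
      rw [hsdef, Finset.card_image_of_injective _ hyinj, Finset.card_univ, Fintype.card_fin]
    have hssub : ↑s ⊆ preCantorSet N := by
      intro z hz
      simp only [hsdef, Finset.coe_image, Set.mem_image] at hz
      obtain ⟨i, _, rfl⟩ := hz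
      exact Set.mem_iInter.mp (hymem i) N
    obtain ⟨a, ha, b, hb, hab, habs⟩ := cantor_pigeon N s hssub (by omega)
    simp only [hsdef, Finset.mem_image] at ha hb
    obtain ⟨i, _, rfl⟩ := ha
    obtain ⟨j, _, rfl⟩ := hb
    have hij : i ≠ j := fun h => hab (by rw [h])
    have hbdd : BddBelow (Set.range fun p : {p : Fin M × Fin M // p.1 ≠ p.2} =>
        dist (y p.1.1) (y p.1.2)) := by
      refine ⟨0, ?_⟩
      rintro r ⟨p, rfl⟩
      exact dist_nonneg
    calc sep y ≤ dist (y i) (y j) := ciInf_le hbdd ⟨(i, j), hij⟩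
      _ ≤ (1/3:ℝ)^N := by rw [Real.dist_eq]; exact habs
  apply le_antisymm
  · exact ciSup_le hub
  · have hbddA : BddAbove (Set.range fun y :
        {x : Fin M → ℝ // Function.Injective x ∧ ∀ i, x i ∈ cantorSet} => sep y.1) := by
      refine ⟨(1/3:ℝ)^N, ?_⟩
      rintro r ⟨y, rfl⟩
      exact hub y
    refine le_trans ?_ (le_ciSup hbddA cfg)
    apply le_ciInf
    rintro ⟨⟨i, j⟩, hij⟩
    exact hsep' i j hij
end

section
/- The 5-point best-packing distance of the unit sphere S² in ℝ³ (with Euclidean metric) equals √2. -/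
open scoped BigOperators
open Filter Metric

open scoped RealInnerProductSpace

/-- Among any five vectors in `ℝ³` two have nonnegative inner product. -/
lemma aux_nonneg_inner (v : Fin 5 → EuclideanSpace ℝ (Fin 3)) :
    ∃ i j : Fin 5, i ≠ j ∧ 0 ≤ ⟪v i, v j⟫ := by
  by_contra hcon
  push_neg at hcon
  set w : Fin 4 → EuclideanSpace ℝ (Fin 3) := fun i => v i.castSucc with hw
  have hdep : ¬ LinearIndependent ℝ w := by
    intro hli
    have := hli.fintype_card_le_finrank
    simp [finrank_euclideanSpace] at this
  obtain ⟨g, hg0, i0, hi0⟩ := Fintype.not_linearIndependent_iff.mp hdep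
  have hinner : ∀ i j : Fin 4, i ≠ j → ⟪w i, w j⟫ < 0 := by
    intro i j hij
    exact hcon _ _ (by simpa using (Fin.castSucc_injective 4).ne hij)
  set P : Finset (Fin 4) := Finset.univ.filter (fun i => 0 < g i) with hP
  set N : Finset (Fin 4) := Finset.univ.filter (fun i => g i < 0) with hN
  have hmemP : ∀ i, i ∈ P ↔ 0 < g i := by intro i; simp [hP]
  have hmemN : ∀ i, i ∈ N ↔ g i < 0 := by intro i; simp [hN]
  have h2 : ∑ i ∈ Pᶜ, g i • w i = ∑ i ∈ N, g i • w i := by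
    refine (Finset.sum_subset ?_ ?_).symm
    · intro i hi
      rw [Finset.mem_compl, hmemP]
      rw [hmemN] at hi
      linarith
    · intro i hi hni
      rw [Finset.mem_compl, hmemP, not_lt] at hi
      rw [hmemN, not_lt] at hni
      have : g i = 0 := le_antisymm hi hni
      simp [this]
  have hsplit : ∑ i ∈ P, g i • w i + ∑ i ∈ N, g i • w i = 0 := by
    rw [← h2, Finset.sum_add_sum_compl, hg0]
  have key : ∃ c : Fin 4 → ℝ, (∀ i, 0 ≤ c i) ∧ ∑ i, c i • w i = 0 ∧ ∃ i, 0 < c i := by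
    rcases Finset.eq_empty_or_nonempty N with hNe | hNne
    · refine ⟨g, ?_, hg0, ⟨i0, ?_⟩⟩
      · intro i
        by_contra hneg
        push_neg at hneg
        have : i ∈ N := (hmemN i).mpr hneg
        simp [hNe] at this
      · rcases lt_or_gt_of_ne hi0 with h | h
        · exact absurd ((hmemN i0).mpr h) (by simp [hNe])
        · exact h
    rcases Finset.eq_empty_or_nonempty P with hPe | hPne
    · refine ⟨fun i => -g i, ?_, ?_, ⟨i0, ?_⟩⟩
      · intro i
        show (0:ℝ) ≤ -g i
        by_contra hneg
        push_neg at hneg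
        have : i ∈ P := (hmemP i).mpr (by linarith)
        simp [hPe] at this
      · have : ∑ i : Fin 4, (-g i) • w i = -∑ i : Fin 4, g i • w i := by
          rw [← Finset.sum_neg_distrib]
          exact Finset.sum_congr rfl (fun i _ => by rw [neg_smul])
        rw [this, hg0, neg_zero]
      · show (0:ℝ) < -g i0
        rcases lt_or_gt_of_ne hi0 with h | h
        · linarith
        · exact absurd ((hmemP i0).mpr h) (by simp [hPe])
    -- both nonempty: contradiction
    exfalso
    have ha : ∑ i ∈ P, g i • w i = ∑ j ∈ N, (-g j) • w j := by
      have : ∑ j ∈ N, (-g j) • w j = -∑ j ∈ N, g j • w j := by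
        rw [← Finset.sum_neg_distrib]
        exact Finset.sum_congr rfl (fun i _ => by rw [neg_smul])
      rw [this]
      exact eq_neg_of_add_eq_zero_left hsplit
    have hnonneg : (0:ℝ) ≤ ⟪∑ i ∈ P, g i • w i, ∑ i ∈ P, g i • w i⟫ := real_inner_self_nonneg
    -- expand
    have hexp : ⟪∑ i ∈ P, g i • w i, ∑ j ∈ N, (-g j) • w j⟫
        = ∑ i ∈ P, ∑ j ∈ N, g i * (-g j * ⟪w i, w j⟫) := by
      rw [sum_inner]
      refine Finset.sum_congr rfl (fun i _ => ?_)
      rw [real_inner_smul_left, inner_sum, Finset.mul_sum]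
      refine Finset.sum_congr rfl (fun j _ => ?_)
      rw [real_inner_smul_right]
    nth_rewrite 2 [ha] at hnonneg
    rw [hexp] at hnonneg
    have hneg : ∑ i ∈ P, ∑ j ∈ N, g i * (-g j * ⟪w i, w j⟫) < 0 := by
      have : ∀ i ∈ P, ∑ j ∈ N, g i * (-g j * ⟪w i, w j⟫) < 0 := by
        intro i hi
        rw [hmemP] at hi
        have : ∀ j ∈ N, g i * (-g j * ⟪w i, w j⟫) < 0 := by
          intro j hj
          rw [hmemN] at hj
          have hij : i ≠ j := by intro h; rw [h] at hi; linarith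
          have := hinner i j hij
          have h1 : -g j * ⟪w i, w j⟫ < 0 := mul_neg_of_pos_of_neg (by linarith) this
          exact mul_neg_of_pos_of_neg hi h1
        calc ∑ j ∈ N, g i * (-g j * ⟪w i, w j⟫) < ∑ _j ∈ N, (0:ℝ) :=
              Finset.sum_lt_sum (fun j hj => (this j hj).le)
                ⟨hNne.choose, hNne.choose_spec, this _ hNne.choose_spec⟩
          _ = 0 := by simp
      calc ∑ i ∈ P, ∑ j ∈ N, g i * (-g j * ⟪w i, w j⟫) < ∑ _i ∈ P, (0:ℝ) :=
            Finset.sum_lt_sum (fun i hi => (this i hi).le)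
              ⟨hPne.choose, hPne.choose_spec, this _ hPne.choose_spec⟩
        _ = 0 := by simp
    linarith
  obtain ⟨c, hc0, hcsum, i1, hi1⟩ := key
  have h0 : (0:ℝ) = ∑ i, c i * ⟪w i, v 4⟫ := by
    have h := congrArg (fun z => ⟪z, v 4⟫) hcsum
    simp only [sum_inner, real_inner_smul_left, inner_zero_left] at h
    exact h.symm
  have hlt : ∑ i, c i * ⟪w i, v 4⟫ < 0 := by
    have hle : ∀ i ∈ Finset.univ, c i * ⟪w i, v 4⟫ ≤ (0:ℝ) := by
      intro i _
      have hiv : ⟪w i, v 4⟫ < 0 := hcon _ _ (Fin.ne_of_lt (Fin.castSucc_lt_last i))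
      exact mul_nonpos_of_nonneg_of_nonpos (hc0 i) hiv.le
    have hstrict : ∃ i ∈ Finset.univ, c i * ⟪w i, v 4⟫ < (0:ℝ) :=
      ⟨i1, Finset.mem_univ _,
        mul_neg_of_pos_of_neg hi1 (hcon _ _ (Fin.ne_of_lt (Fin.castSucc_lt_last i1)))⟩
    calc ∑ i, c i * ⟪w i, v 4⟫ < ∑ _i : Fin 4, (0:ℝ) := Finset.sum_lt_sum hle hstrict
      _ = 0 := by simp
  linarith [h0, hlt]

lemma dist_le_sqrt_two (x y : EuclideanSpace ℝ (Fin 3))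
    (hx : x ∈ Metric.sphere (0 : EuclideanSpace ℝ (Fin 3)) 1)
    (hy : y ∈ Metric.sphere (0 : EuclideanSpace ℝ (Fin 3)) 1)
    (h : 0 ≤ ⟪x, y⟫) : dist x y ≤ Real.sqrt 2 := by
  rw [mem_sphere_zero_iff_norm] at hx hy
  rw [dist_eq_norm, Real.le_sqrt (norm_nonneg _) (by norm_num), norm_sub_sq_real, hx, hy]
  linarith

lemma sep_le_config (x : Fin 5 → EuclideanSpace ℝ (Fin 3))
    (hx : ∀ i, x i ∈ Metric.sphere (0 : EuclideanSpace ℝ (Fin 3)) 1) :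
    sep x ≤ Real.sqrt 2 := by
  obtain ⟨i, j, hij, hin⟩ := aux_nonneg_inner x
  have hb : BddBelow (Set.range fun p : {p : Fin 5 × Fin 5 // p.1 ≠ p.2} =>
      dist (x p.1.1) (x p.1.2)) := (Set.finite_range _).bddBelow
  calc sep x ≤ dist (x i) (x j) := ciInf_le hb ⟨(i, j), hij⟩
    _ ≤ Real.sqrt 2 := dist_le_sqrt_two _ _ (hx i) (hx j) hin

noncomputable def pts : Fin 5 → EuclideanSpace ℝ (Fin 3) := fun i =>
  (WithLp.equiv 2 (Fin 3 → ℝ)).symm (![![1,0,0],![-1,0,0],![0,1,0],![0,-1,0],![0,0,1]] i)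

lemma pts_mem : ∀ i, pts i ∈ Metric.sphere (0 : EuclideanSpace ℝ (Fin 3)) 1 := by
  intro i
  rw [mem_sphere_zero_iff_norm]
  fin_cases i <;>
    simp [pts, EuclideanSpace.norm_eq, WithLp.equiv_symm_apply, PiLp.toLp_apply, Matrix.cons_val, Fin.sum_univ_three]

lemma pts_dist : ∀ i j : Fin 5, i ≠ j → Real.sqrt 2 ≤ dist (pts i) (pts j) := by
  intro i j hij
  fin_cases i <;> fin_cases j <;>
    first
    | (exact absurd rfl hij)
    | (simp only [pts, EuclideanSpace.dist_eq, WithLp.equiv_symm_apply, PiLp.toLp_apply, Matrix.cons_val, Fin.sum_univ_three,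
        Real.dist_eq]
       norm_num
       try exact Real.sqrt_le_sqrt (by norm_num [Matrix.cons_val_two, Matrix.tail_cons, Matrix.head_cons]))

lemma pts_dist02 : dist (pts 0) (pts 2) = Real.sqrt 2 := by
  simp only [pts, EuclideanSpace.dist_eq, WithLp.equiv_symm_apply, PiLp.toLp_apply, Matrix.cons_val, Fin.sum_univ_three,
    Real.dist_eq]
  norm_num

lemma pts_inj : Function.Injective pts := by
  intro i j h
  by_contra hij
  have h1 := pts_dist i j hij
  rw [h, dist_self] at h1
  have h2 : (0:ℝ) < Real.sqrt 2 := Real.sqrt_pos.mpr (by norm_num)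
  linarith

lemma sep_pts : sep pts = Real.sqrt 2 := by
  haveI : Nonempty {p : Fin 5 × Fin 5 // p.1 ≠ p.2} := ⟨⟨((0:Fin 5),(1:Fin 5)), by decide⟩⟩
  apply le_antisymm
  · have hb : BddBelow (Set.range fun p : {p : Fin 5 × Fin 5 // p.1 ≠ p.2} =>
        dist (pts p.1.1) (pts p.1.2)) := (Set.finite_range _).bddBelow
    calc sep pts ≤ dist (pts 0) (pts 2) := ciInf_le hb ⟨((0 : Fin 5), (2 : Fin 5)), by decide⟩
      _ = Real.sqrt 2 := pts_dist02
  · exact le_ciInf fun p => pts_dist p.1.1 p.1.2 p.2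

theorem stmt_9 :
    packDist (Metric.sphere (0 : EuclideanSpace ℝ (Fin 3)) 1) 5 = Real.sqrt 2 := by
  haveI hne : Nonempty {x : Fin 5 → EuclideanSpace ℝ (Fin 3) //
      Function.Injective x ∧ ∀ i, x i ∈ Metric.sphere (0 : EuclideanSpace ℝ (Fin 3)) 1} :=
    ⟨⟨pts, pts_inj, pts_mem⟩⟩
  apply le_antisymm
  · exact ciSup_le fun x => sep_le_config x.1 x.2.2
  · have hbdd : BddAbove (Set.range fun x : {x : Fin 5 → EuclideanSpace ℝ (Fin 3) //
        Function.Injective x ∧ ∀ i, x i ∈ Metric.sphere (0 : EuclideanSpace ℝ (Fin 3)) 1} =>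
        sep x.1) := by
      refine ⟨Real.sqrt 2, ?_⟩
      rintro r ⟨x, rfl⟩
      exact sep_le_config x.1 x.2.2
    have h := le_ciSup hbdd
      (⟨pts, pts_inj, pts_mem⟩ : {x : Fin 5 → EuclideanSpace ℝ (Fin 3) //
        Function.Injective x ∧ ∀ i, x i ∈ Metric.sphere (0 : EuclideanSpace ℝ (Fin 3)) 1})
    rw [packDist]
    exact sep_pts ▸ h
end

section
/- Every 5-point best-packing configuration on S² (Euclidean metric) consists of two antipodal points and three points on the great circle (equator) orthogonal to them, such that the equatorial triangle has all central angles at least π/2 between consecutive points (equivalently, all pairwise equatorial distances at least √2). -/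
open scoped BigOperators
open Filter Metric

open scoped RealInnerProductSpace
open Finset Module

local notation "E3" => EuclideanSpace ℝ (Fin 3)

lemma lemD {v w : E3} (hv : ‖v‖ = 1) (hw : ‖w‖ = 1) (hneg : ⟪v, w⟫ ≤ 0)
    (a b : ℝ) (hrel : a • v + b • w = 0) (hab : a ≠ 0 ∨ b ≠ 0) : w = -v := by
  have hv0 : v ≠ 0 := by intro h; rw [h] at hv; simp at hv
  have hb : b ≠ 0 := by
    rintro rfl
    rcases hab with ha | ha
    · rw [zero_smul, add_zero, smul_eq_zero] at hrel
      exact hv0 (hrel.resolve_left ha)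
    · exact ha rfl
  have hwv : w = (-(a / b)) • v := by
    have h1 : b • w = -(a • v) := by
      rw [eq_neg_of_add_eq_zero_right hrel]
    have h2 : w = b⁻¹ • (-(a • v)) := by rw [← h1, inv_smul_smul₀ hb]
    rw [h2, smul_neg, smul_smul, ← neg_smul]
    ring_nf
  set r : ℝ := -(a / b) with hr
  have hnorm : |r| = 1 := by
    have := congrArg norm hwv
    rw [hw, norm_smul, hv, Real.norm_eq_abs, mul_one] at this
    exact this.symm
  have hinner : ⟪v, w⟫ = r := by
    rw [hwv, real_inner_smul_right, real_inner_self_eq_norm_sq, hv]; ring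
  have hr1 : r = -1 := by
    rw [hinner] at hneg
    rcases abs_cases r with ⟨h1, _⟩ | ⟨h1, _⟩ <;> linarith [hnorm ▸ h1, hnorm]
  rw [hwv, hr1, neg_one_smul]

lemma depP (v : Fin 5 → E3) (hnp : ∀ i j, i ≠ j → ⟪v i, v j⟫ ≤ 0)
    (c : Fin 5 → ℝ) (hsum : ∑ i, c i • v i = 0) :
    (∑ i ∈ Finset.univ.filter (fun i => 0 < c i), c i • v i = 0) ∧
    (∀ k ∉ Finset.univ.filter (fun i => 0 < c i),
      ∀ i ∈ Finset.univ.filter (fun i => 0 < c i), ⟪v i, v k⟫ = 0) := by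
  classical
  set P := Finset.univ.filter (fun i => 0 < c i) with hP
  set Q := Finset.univ.filter (fun i => ¬ 0 < c i) with hQ
  set u := ∑ i ∈ P, c i • v i with hu
  have hsplit : u + ∑ i ∈ Q, c i • v i = 0 := by
    rw [hu, hQ, hP, Finset.sum_filter_add_sum_filter_not]; exact hsum
  have hu2 : u = -∑ i ∈ Q, c i • v i := eq_neg_of_add_eq_zero_left hsplit
  have hinner : ⟪u, ∑ i ∈ Q, c i • v i⟫ = ∑ i ∈ P, ∑ j ∈ Q, c i * (c j * ⟪v i, v j⟫) := by
    rw [hu, sum_inner]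
    refine Finset.sum_congr rfl fun i _ => ?_
    rw [real_inner_smul_left, inner_sum, Finset.mul_sum]
    exact Finset.sum_congr rfl fun j _ => by rw [real_inner_smul_right]
  have hterm : ∀ i ∈ P, ∀ j ∈ Q, 0 ≤ c i * (c j * ⟪v i, v j⟫) := by
    intro i hi j hj
    rw [hP, Finset.mem_filter] at hi
    rw [hQ, Finset.mem_filter] at hj
    have hij : i ≠ j := by rintro rfl; exact hj.2 hi.2
    have h1 : c j ≤ 0 := le_of_not_gt hj.2
    have h2 : ⟪v i, v j⟫ ≤ 0 := hnp i j hij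
    have h3 := mul_nonneg (neg_nonneg.2 h1) (neg_nonneg.2 h2)
    nlinarith [hi.2.le, h3]
  have huu : ⟪u, u⟫ ≤ 0 := by
    nth_rewrite 2 [hu2]
    rw [inner_neg_right, hinner]
    have : 0 ≤ ∑ i ∈ P, ∑ j ∈ Q, c i * (c j * ⟪v i, v j⟫) :=
      Finset.sum_nonneg fun i hi => Finset.sum_nonneg fun j hj => hterm i hi j hj
    linarith
  have hu0 : u = 0 := real_inner_self_nonpos.mp huu
  refine ⟨hu0, fun k hk i hi => ?_⟩
  have hzero : ∑ i ∈ P, c i * ⟪v i, v k⟫ = 0 := by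
    have h0 : ⟪u, v k⟫ = 0 := by rw [hu0, inner_zero_left]
    rw [hu, sum_inner] at h0
    rw [← h0]
    exact Finset.sum_congr rfl fun i _ => (real_inner_smul_left _ _ _).symm
  have hnpt : ∀ i ∈ P, c i * ⟪v i, v k⟫ ≤ 0 := by
    intro i hi
    rw [hP, Finset.mem_filter] at hi
    have hik : i ≠ k := by rintro rfl; exact hk (by rw [hP, Finset.mem_filter]; exact ⟨Finset.mem_univ i, hi.2⟩)
    nlinarith [hnp i k hik, hi.2]
  have := (Finset.sum_eq_zero_iff_of_nonpos hnpt).mp hzero i hi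
  rw [hP, Finset.mem_filter] at hi
  rcases mul_eq_zero.mp this with h | h
  · exact absurd h (ne_of_gt hi.2)
  · exact h

lemma lemC (v : Fin 5 → E3) (hunit : ∀ i, ‖v i‖ = 1)
    (hnp : ∀ i j, i ≠ j → ⟪v i, v j⟫ ≤ 0)
    (a b k l : Fin 5) (hab : a ≠ b) (hkl : k ≠ l)
    (hak : ⟪v a, v k⟫ = 0) (hbk : ⟪v b, v k⟫ = 0)
    (hal : ⟪v a, v l⟫ = 0) (hbl : ⟪v b, v l⟫ = 0) :
    ∃ i j, i ≠ j ∧ v j = -v i := by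
  classical
  by_cases hli : LinearIndependent ℝ ![v a, v b]
  · set K := Submodule.span ℝ (Set.range ![v a, v b]) with hK
    have hKr : finrank ℝ K = 2 := by
      rw [hK, finrank_span_eq_card hli]; simp
    have hWr : finrank ℝ Kᗮ = 1 := by
      refine Submodule.finrank_add_finrank_orthogonal' ?_
      rw [hKr, finrank_euclideanSpace_fin]
    have hmem : ∀ m : Fin 5, ⟪v a, v m⟫ = 0 → ⟪v b, v m⟫ = 0 → v m ∈ Kᗮ := by
      intro m h1 h2
      rw [Submodule.mem_orthogonal]
      intro u hu
      induction hu using Submodule.span_induction with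
      | mem y hy =>
          obtain ⟨n, rfl⟩ := hy
          fin_cases n
          · simpa using h1
          · simpa using h2
      | zero => simp
      | add y z _ _ hy hz => rw [inner_add_left, hy, hz, add_zero]
      | smul t y _ hy => rw [real_inner_smul_left, hy, mul_zero]
    have hk' : v k ∈ Kᗮ := hmem k hak hbk
    have hl' : v l ∈ Kᗮ := hmem l hal hbl
    have hnli2 : ¬ LinearIndependent ℝ ![(⟨v k, hk'⟩ : Kᗮ), ⟨v l, hl'⟩] := by
      intro h
      have := h.fintype_card_le_finrank
      rw [hWr] at this
      simp at this
    obtain ⟨g, hg, m, hm⟩ := Fintype.not_linearIndependent_iff.mp hnli2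
    rw [Fin.sum_univ_two] at hg
    have hgE : g 0 • v k + g 1 • v l = 0 := by
      have := congrArg (Subtype.val) hg
      simpa using this
    have hg' : g 0 ≠ 0 ∨ g 1 ≠ 0 := by
      fin_cases m
      · exact Or.inl hm
      · exact Or.inr hm
    exact ⟨k, l, hkl, lemD (hunit k) (hunit l) (hnp k l hkl) (g 0) (g 1) hgE hg'⟩
  · obtain ⟨g, hg, m, hm⟩ := Fintype.not_linearIndependent_iff.mp hli
    rw [Fin.sum_univ_two] at hg
    simp only [Matrix.cons_val_zero, Matrix.cons_val_one, Matrix.head_cons] at hg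
    have hg' : g 0 ≠ 0 ∨ g 1 ≠ 0 := by
      fin_cases m
      · exact Or.inl hm
      · exact Or.inr hm
    exact ⟨a, b, hab, lemD (hunit a) (hunit b) (hnp a b hab) (g 0) (g 1) hg hg'⟩

lemma smallP (v : Fin 5 → E3) (hunit : ∀ i, ‖v i‖ = 1)
    (hnp : ∀ i j, i ≠ j → ⟪v i, v j⟫ ≤ 0) (c : Fin 5 → ℝ)
    (hsum : ∑ i, c i • v i = 0) (hpos : ∃ i, 0 < c i)
    (hcard : (Finset.univ.filter (fun i => 0 < c i)).card ≤ 3) :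
    ∃ i j, i ≠ j ∧ v j = -v i := by
  classical
  obtain ⟨hsumP, horth⟩ := depP v hnp c hsum
  set P := Finset.univ.filter (fun i => 0 < c i) with hP
  have hPne : P.Nonempty := by
    obtain ⟨i, hi⟩ := hpos
    exact ⟨i, by rw [hP, Finset.mem_filter]; exact ⟨Finset.mem_univ i, hi⟩⟩
  have hmemP : ∀ i ∈ P, 0 < c i := fun i hi => (Finset.mem_filter.mp hi).2
  have h1 : 1 ≤ P.card := Finset.card_pos.mpr hPne
  have h123 : P.card = 1 ∨ P.card = 2 ∨ P.card = 3 := by omega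
  rcases h123 with h | h | h
  · obtain ⟨i, hi⟩ := Finset.card_eq_one.mp h
    rw [hi, Finset.sum_singleton] at hsumP
    have hiP : i ∈ P := by rw [hi]; exact Finset.mem_singleton_self i
    rcases smul_eq_zero.mp hsumP with h' | h'
    · exact absurd h' (ne_of_gt (hmemP i hiP))
    · have hui := hunit i
      rw [h'] at hui
      simp at hui
  · obtain ⟨i, j, hij, hij2⟩ := Finset.card_eq_two.mp h
    have hiP : i ∈ P := by rw [hij2]; simp
    have hjP : j ∈ P := by rw [hij2]; simp
    rw [hij2, Finset.sum_pair hij] at hsumP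
    exact ⟨i, j, hij, lemD (hunit i) (hunit j) (hnp i j hij) (c i) (c j) hsumP
      (Or.inl (ne_of_gt (hmemP i hiP)))⟩
  · have hcompl : Pᶜ.card = 2 := by
      rw [Finset.card_compl, h]
      rfl
    obtain ⟨k, l, hkl, hkl2⟩ := Finset.card_eq_two.mp hcompl
    have hkP : k ∉ P := by
      rw [← Finset.mem_compl, hkl2]; simp
    have hlP : l ∉ P := by
      rw [← Finset.mem_compl, hkl2]; simp
    obtain ⟨a, ha, b, hb, hab⟩ := Finset.one_lt_card.mp (by omega : 1 < P.card)
    exact lemC v hunit hnp a b k l hab hkl (horth k hkP a ha) (horth k hkP b hb)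
      (horth l hlP a ha) (horth l hlP b hb)

lemma anti (v : Fin 5 → E3) (hunit : ∀ i, ‖v i‖ = 1)
    (hnp : ∀ i j, i ≠ j → ⟪v i, v j⟫ ≤ 0) : ∃ i j, i ≠ j ∧ v j = -v i := by
  classical
  -- a linear relation among the first four vectors
  have h4 : ¬ LinearIndependent ℝ ![v 0, v 1, v 2, v 3] := by
    intro h
    have := h.fintype_card_le_finrank
    rw [finrank_euclideanSpace_fin] at this
    simp at this
  obtain ⟨g0, hg0, m0, hm0⟩ := Fintype.not_linearIndependent_iff.mp h4
  rw [Fin.sum_univ_four] at hg0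
  simp only [Matrix.cons_val_zero, Matrix.cons_val_one, Matrix.head_cons,
    Matrix.cons_val_two, Matrix.tail_cons, Matrix.cons_val_three] at hg0
  -- normalize sign so that some coefficient is positive
  obtain ⟨g, hgsum, hgpos⟩ :
      ∃ g : Fin 4 → ℝ, (g 0 • v 0 + g 1 • v 1 + g 2 • v 2 + g 3 • v 3 = 0) ∧ ∃ m, 0 < g m := by
    by_cases hp : ∃ m, 0 < g0 m
    · exact ⟨g0, hg0, hp⟩
    · push_neg at hp
      refine ⟨-g0, ?_, ⟨m0, ?_⟩⟩
      · simp only [Pi.neg_apply, neg_smul]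
        rw [← neg_add, ← neg_add, ← neg_add, hg0, neg_zero]
      · simp only [Pi.neg_apply]
        have := hp m0
        rcases lt_or_eq_of_le this with h' | h'
        · linarith
        · exact absurd h' hm0
  set c : Fin 5 → ℝ := ![g 0, g 1, g 2, g 3, 0] with hc
  have hsum : ∑ i, c i • v i = 0 := by
    rw [Fin.sum_univ_five]
    simp only [hc, Matrix.cons_val_zero, Matrix.cons_val_one, Matrix.head_cons,
      Matrix.cons_val_two, Matrix.tail_cons, Matrix.cons_val_three, Matrix.cons_val_four,
      zero_smul, add_zero]
    exact hgsum
  have hpos : ∃ i, 0 < c i := by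
    obtain ⟨m, hm⟩ := hgpos
    fin_cases m
    · exact ⟨0, by simpa [hc] using hm⟩
    · exact ⟨1, by simpa [hc] using hm⟩
    · exact ⟨2, by simpa [hc] using hm⟩
    · exact ⟨3, by simpa [hc] using hm⟩
  set P := Finset.univ.filter (fun i => 0 < c i) with hP
  have h4P : (4 : Fin 5) ∉ P := by
    rw [hP, Finset.mem_filter]
    rintro ⟨-, h'⟩
    simp [hc] at h'
  have hcard4 : P.card ≤ 4 := by
    by_contra h'
    push_neg at h'
    have h5 : P.card = 5 := le_antisymm (by simpa using Finset.card_le_card (Finset.subset_univ P)) h'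
    have : P = Finset.univ := Finset.eq_univ_of_card P (by simpa using h5)
    exact h4P (this ▸ Finset.mem_univ (4 : Fin 5))
  by_cases hsmall : P.card ≤ 3
  · exact smallP v hunit hnp c hsum hpos hsmall
  · have hPc : P.card = 4 := by omega
    obtain ⟨hsumP, horth⟩ := depP v hnp c hsum
    have hcompl : Pᶜ.card = 1 := by rw [Finset.card_compl, hPc]; rfl
    obtain ⟨k, hk⟩ := Finset.card_eq_one.mp hcompl
    have hkP : k ∉ P := by rw [← Finset.mem_compl, hk]; simp
    -- pick three distinct elements of P
    obtain ⟨q0, hq0⟩ := Finset.card_pos.mp (by omega : 0 < P.card)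
    have herase : (P.erase q0).card = 3 := by rw [Finset.card_erase_of_mem hq0, hPc]
    obtain ⟨q1, q2, q3, h12, h13, h23, herase2⟩ := Finset.card_eq_three.mp herase
    have hq1 : q1 ∈ P.erase q0 := by rw [herase2]; simp
    have hq2 : q2 ∈ P.erase q0 := by rw [herase2]; simp
    have hq1P : q1 ∈ P := Finset.mem_of_mem_erase hq1
    have hq2P : q2 ∈ P := Finset.mem_of_mem_erase hq2
    have hq10 : q1 ≠ q0 := Finset.ne_of_mem_erase hq1
    have hq20 : q2 ≠ q0 := Finset.ne_of_mem_erase hq2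
    -- the four vectors of P live in the plane orthogonal to v k
    have hvk0 : v k ≠ 0 := by
      intro h'
      have := hunit k
      rw [h'] at this; simp at this
    haveI : Fact (finrank ℝ E3 = 2 + 1) := ⟨by rw [finrank_euclideanSpace_fin]⟩
    have hWr : finrank ℝ ((ℝ ∙ (v k))ᗮ) = 2 := Submodule.finrank_orthogonal_span_singleton hvk0
    have hmemW : ∀ i ∈ P, v i ∈ (ℝ ∙ (v k))ᗮ := by
      intro i hi
      rw [Submodule.mem_orthogonal_singleton_iff_inner_right]
      rw [real_inner_comm]
      exact horth k hkP i hi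
    set W := (ℝ ∙ (v k))ᗮ with hW
    have hnli3 : ¬ LinearIndependent ℝ
        ![(⟨v q0, hmemW q0 hq0⟩ : W), ⟨v q1, hmemW q1 hq1P⟩, ⟨v q2, hmemW q2 hq2P⟩] := by
      intro h'
      have := h'.fintype_card_le_finrank
      rw [hWr] at this
      simp at this
    obtain ⟨g', hg', m', hm'⟩ := Fintype.not_linearIndependent_iff.mp hnli3
    rw [Fin.sum_univ_three] at hg'
    have hgE : g' 0 • v q0 + g' 1 • v q1 + g' 2 • v q2 = 0 := by
      have := congrArg (Subtype.val) hg'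
      simpa using this
    -- sign-normalize g'
    obtain ⟨g'', hg''sum, hg''pos⟩ :
        ∃ g'' : Fin 3 → ℝ, (g'' 0 • v q0 + g'' 1 • v q1 + g'' 2 • v q2 = 0) ∧ ∃ m, 0 < g'' m := by
      by_cases hp : ∃ m, 0 < g' m
      · exact ⟨g', hgE, hp⟩
      · push_neg at hp
        refine ⟨-g', ?_, ⟨m', ?_⟩⟩
        · simp only [Pi.neg_apply, neg_smul]
          rw [← neg_add, ← neg_add, hgE, neg_zero]
        · simp only [Pi.neg_apply]
          rcases lt_or_eq_of_le (hp m') with h' | h'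
          · linarith
          · exact absurd h' hm'
    set c' : Fin 5 → ℝ :=
      fun i => if i = q0 then g'' 0 else if i = q1 then g'' 1 else if i = q2 then g'' 2 else 0
      with hc'
    have hcq0 : c' q0 = g'' 0 := by rw [hc']; simp
    have hcq1 : c' q1 = g'' 1 := by rw [hc']; simp [hq10]
    have hcq2 : c' q2 = g'' 2 := by rw [hc']; simp [hq20, h12.symm]
    have hsupp : ∀ i, i ≠ q0 → i ≠ q1 → i ≠ q2 → c' i = 0 := by
      intro i h0 h1' h2'
      rw [hc']; simp [h0, h1', h2']
    have ht : ({q0, q1, q2} : Finset (Fin 5)).card ≤ 3 := by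
      refine le_trans (Finset.card_insert_le _ _) ?_
      have := Finset.card_insert_le q1 ({q2} : Finset (Fin 5))
      simp at this ⊢
      omega
    have hq0ne : q0 ∉ ({q1, q2} : Finset (Fin 5)) := by simp [Ne.symm hq10, Ne.symm hq20]
    have hq1ne : q1 ∉ ({q2} : Finset (Fin 5)) := by simp [h12]
    have hsum' : ∑ i, c' i • v i = 0 := by
      rw [← Finset.sum_subset (Finset.subset_univ ({q0, q1, q2} : Finset (Fin 5)))
        (fun x _ hx => ?_)]
      · rw [Finset.sum_insert hq0ne, Finset.sum_insert hq1ne, Finset.sum_singleton,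
          hcq0, hcq1, hcq2, ← add_assoc]
        exact hg''sum
      · simp only [Finset.mem_insert, Finset.mem_singleton] at hx
        push_neg at hx
        rw [hsupp x hx.1 hx.2.1 hx.2.2, zero_smul]
    have hpos' : ∃ i, 0 < c' i := by
      obtain ⟨m, hm⟩ := hg''pos
      fin_cases m
      · exact ⟨q0, by rwa [hcq0]⟩
      · exact ⟨q1, by rwa [hcq1]⟩
      · exact ⟨q2, by rwa [hcq2]⟩
    have hcard' : (Finset.univ.filter (fun i => 0 < c' i)).card ≤ 3 := by
      refine le_trans (Finset.card_le_card ?_) ht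
      intro i hi
      rw [Finset.mem_filter] at hi
      by_contra hmem
      simp only [Finset.mem_insert, Finset.mem_singleton] at hmem
      push_neg at hmem
      rw [hsupp i hmem.1 hmem.2.1 hmem.2.2] at hi
      exact lt_irrefl 0 hi.2
    exact smallP v hunit hnp c' hsum' hpos' hcard'

lemma sqrt_two_le_dist {u w : E3} (hu : ‖u‖ = 1) (hw : ‖w‖ = 1) (h : ⟪u, w⟫ ≤ 0) :
    Real.sqrt 2 ≤ dist u w := by
  have h2 : 2 ≤ ‖u - w‖ ^ 2 := by
    rw [norm_sub_sq_real, hu, hw]; nlinarith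
  calc Real.sqrt 2 ≤ Real.sqrt (‖u - w‖ ^ 2) := Real.sqrt_le_sqrt h2
    _ = ‖u - w‖ := Real.sqrt_sq (norm_nonneg _)
    _ = dist u w := (dist_eq_norm u w).symm

lemma inner_nonpos_of_dist {u w : E3} (hu : ‖u‖ = 1) (hw : ‖w‖ = 1)
    (h : Real.sqrt 2 ≤ dist u w) : ⟪u, w⟫ ≤ 0 := by
  have h2 : 2 ≤ ‖u - w‖ ^ 2 := by
    have := pow_le_pow_left₀ (Real.sqrt_nonneg 2) h 2
    rwa [Real.sq_sqrt (by norm_num : (2:ℝ) ≥ 0), dist_eq_norm] at this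
  rw [norm_sub_sq_real, hu, hw] at h2
  nlinarith

noncomputable def y0 : Fin 5 → E3 :=
  ![EuclideanSpace.single 0 1, EuclideanSpace.single 1 1, -EuclideanSpace.single 0 1,
    EuclideanSpace.single 2 1, -EuclideanSpace.single 2 1]

lemma y0_unit : ∀ i, ‖y0 i‖ = 1 := by
  intro i
  fin_cases i <;> simp [y0, EuclideanSpace.norm_single]

lemma y0_np : ∀ i j, i ≠ j → ⟪y0 i, y0 j⟫ ≤ 0 := by
  intro i j hij
  fin_cases i <;> fin_cases j <;>
    first
      | exact absurd rfl hij
      | (simp [y0, inner_neg_left, inner_neg_right, EuclideanSpace.inner_single_left,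
          EuclideanSpace.single_apply])

lemma y0_dist : ∀ i j, i ≠ j → Real.sqrt 2 ≤ dist (y0 i) (y0 j) :=
  fun i j hij => sqrt_two_le_dist (y0_unit i) (y0_unit j) (y0_np i j hij)

lemma y0_inj : Function.Injective y0 := by
  intro i j h
  by_contra hne
  have h1 := y0_dist i j hne
  rw [h, dist_self] at h1
  have := Real.sqrt_pos.mpr (by norm_num : (0:ℝ) < 2)
  linarith

lemma y0_mem : ∀ i, y0 i ∈ Metric.sphere (0 : E3) 1 := by
  intro i
  rw [mem_sphere_zero_iff_norm]
  exact y0_unit i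

theorem stmt_10 (x : Fin 5 → EuclideanSpace ℝ (Fin 3))
    (hx : Function.Injective x)
    (hS : ∀ i, x i ∈ Metric.sphere (0 : EuclideanSpace ℝ (Fin 3)) 1)
    (hbest : sep x = packDist (Metric.sphere (0 : EuclideanSpace ℝ (Fin 3)) 1) 5) :
    ∃ i j : Fin 5, i ≠ j ∧ x j = -x i ∧
      (∀ k, k ≠ i → k ≠ j → inner (𝕜 := ℝ) (x i) (x k) = 0) ∧
      (∀ k l, k ≠ l → k ≠ i → k ≠ j → l ≠ i → l ≠ j →
        Real.sqrt 2 ≤ dist (x k) (x l)) := by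
  classical
  haveI : Nonempty {p : Fin 5 × Fin 5 // p.1 ≠ p.2} := ⟨⟨(0, 1), by decide⟩⟩
  have hnorm : ∀ i, ‖x i‖ = 1 := fun i => mem_sphere_zero_iff_norm.mp (hS i)
  -- lower bounds on infima
  have hbdd_below : ∀ (y : Fin 5 → E3),
      BddBelow (Set.range fun p : {p : Fin 5 × Fin 5 // p.1 ≠ p.2} => dist (y p.1.1) (y p.1.2)) := by
    intro y
    exact ⟨0, by rintro _ ⟨p, rfl⟩; exact dist_nonneg⟩
  -- every admissible configuration has separation at most 2
  have hsep_le : ∀ y : {y : Fin 5 → E3 // Function.Injective y ∧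
      ∀ i, y i ∈ Metric.sphere (0 : E3) 1}, sep y.1 ≤ 2 := by
    intro y
    have h1 : sep y.1 ≤ dist (y.1 0) (y.1 1) := ciInf_le (hbdd_below y.1) ⟨(0, 1), by decide⟩
    have h2 : dist (y.1 0) (y.1 1) ≤ dist (y.1 0) 0 + dist 0 (y.1 1) := dist_triangle _ _ _
    have h3 : dist (y.1 0) 0 = 1 := mem_sphere.mp (y.2.2 0)
    have h4 : dist 0 (y.1 1) = 1 := by rw [dist_comm]; exact mem_sphere.mp (y.2.2 1)
    linarith
  have hbdd : BddAbove (Set.range fun y : {y : Fin 5 → E3 // Function.Injective y ∧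
      ∀ i, y i ∈ Metric.sphere (0 : E3) 1} => sep y.1) :=
    ⟨2, by rintro _ ⟨y, rfl⟩; exact hsep_le y⟩
  have hy0sep : Real.sqrt 2 ≤ sep y0 := le_ciInf fun p => y0_dist _ _ p.2
  have hpack : Real.sqrt 2 ≤ packDist (Metric.sphere (0 : E3) 1) 5 :=
    le_trans hy0sep (le_ciSup hbdd ⟨y0, y0_inj, y0_mem⟩)
  have hdist : ∀ i j, i ≠ j → Real.sqrt 2 ≤ dist (x i) (x j) := by
    intro i j hij
    have : sep x ≤ dist (x i) (x j) := ciInf_le (hbdd_below x) ⟨(i, j), hij⟩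
    rw [hbest] at *
    linarith
  have hnp : ∀ i j, i ≠ j → ⟪x i, x j⟫ ≤ 0 := fun i j hij =>
    inner_nonpos_of_dist (hnorm i) (hnorm j) (hdist i j hij)
  obtain ⟨i, j, hij, hanti⟩ := anti x hnorm hnp
  refine ⟨i, j, hij, hanti, ?_, fun k l hkl _ _ _ _ => hdist k l hkl⟩
  intro k hki hkj
  have h1 : ⟪x i, x k⟫ ≤ 0 := hnp i k (Ne.symm hki)
  have h2 : ⟪x j, x k⟫ ≤ 0 := hnp j k (Ne.symm hkj)
  rw [hanti, inner_neg_left] at h2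
  have : (0:ℝ) ≤ ⟪x i, x k⟫ := by linarith
  linarith
end

section
/- The configuration Q = {(1,0,0), (-1,0,0), (0,1,0), (0,0,1), (0,0,-1)} ⊂ S² has separation distance δ(Q) = √2 and mesh norm η(Q, S²) = √2, hence mesh-separation ratio γ(Q, S²) = 1. -/
open scoped BigOperators
open Filter Metric

noncomputable def pt (a b c : ℝ) : EuclideanSpace ℝ (Fin 3) :=
  (EuclideanSpace.equiv (Fin 3) ℝ).symm ![a, b, c]

noncomputable def Qconf : Fin 5 → EuclideanSpace ℝ (Fin 3) :=
  ![pt 1 0 0, pt (-1) 0 0, pt 0 1 0, pt 0 0 1, pt 0 0 (-1)]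


lemma dist_pt (a b c d e f : ℝ) :
    dist (pt a b c) (pt d e f) = Real.sqrt ((a-d)^2+(b-e)^2+(c-f)^2) := by
  simp [EuclideanSpace.dist_eq, pt, Fin.sum_univ_three, Real.dist_eq, sq_abs]

lemma dist_pt' (y : EuclideanSpace ℝ (Fin 3)) (d e f : ℝ) :
    dist y (pt d e f) = Real.sqrt ((y 0-d)^2+(y 1-e)^2+(y 2-f)^2) := by
  simp [EuclideanSpace.dist_eq, pt, Fin.sum_univ_three, Real.dist_eq, sq_abs]

lemma norm_pt (y : EuclideanSpace ℝ (Fin 3)) (h : y ∈ Metric.sphere (0 : EuclideanSpace ℝ (Fin 3)) 1) :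
    (y 0)^2 + (y 1)^2 + (y 2)^2 = 1 := by
  rw [mem_sphere_zero_iff_norm, EuclideanSpace.norm_eq] at h
  simp only [Real.norm_eq_abs, sq_abs, Fin.sum_univ_three, Real.sqrt_eq_one] at h
  exact h

lemma key : ∀ i j : Fin 5, i ≠ j → Real.sqrt 2 ≤ dist (Qconf i) (Qconf j) := by
  intro i j hij
  fin_cases i <;> fin_cases j <;>
    first
    | exact absurd rfl hij
    | · show Real.sqrt 2 ≤ dist (pt _ _ _) (pt _ _ _)
        rw [dist_pt]
        apply Real.sqrt_le_sqrt
        norm_num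

lemma sep_eq : sep Qconf = Real.sqrt 2 := by
  have bdd : BddBelow (Set.range fun p : {p : Fin 5 × Fin 5 // p.1 ≠ p.2} =>
      dist (Qconf p.1.1) (Qconf p.1.2)) := by
    refine ⟨0, ?_⟩
    rintro r ⟨p, rfl⟩
    exact dist_nonneg
  apply le_antisymm
  · have := ciInf_le bdd (⟨(0, 2), by decide⟩ : {p : Fin 5 × Fin 5 // p.1 ≠ p.2})
    refine this.trans_eq ?_
    show dist (pt 1 0 0) (pt 0 1 0) = _
    rw [dist_pt]; norm_num
  · haveI : Nonempty {p : Fin 5 × Fin 5 // p.1 ≠ p.2} := ⟨⟨(0, 2), by decide⟩⟩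
    exact le_ciInf fun p => key p.1.1 p.1.2 p.2

lemma inner_le (y : EuclideanSpace ℝ (Fin 3))
    (hy : y ∈ Metric.sphere (0 : EuclideanSpace ℝ (Fin 3)) 1) :
    (⨅ i, dist y (Qconf i)) ≤ Real.sqrt 2 := by
  have hn := norm_pt y hy
  rcases le_or_gt 0 (y 0) with h | h
  · refine (ciInf_le (Finite.bddBelow_range _) 0).trans ?_
    show dist y (pt 1 0 0) ≤ _
    rw [dist_pt']
    apply Real.sqrt_le_sqrt
    nlinarith
  · refine (ciInf_le (Finite.bddBelow_range _) 1).trans ?_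
    show dist y (pt (-1) 0 0) ≤ _
    rw [dist_pt']
    apply Real.sqrt_le_sqrt
    nlinarith

lemma mesh_eq : mesh (Metric.sphere (0 : EuclideanSpace ℝ (Fin 3)) 1) Qconf = Real.sqrt 2 := by
  have hy0 : pt 0 (-1) 0 ∈ Metric.sphere (0 : EuclideanSpace ℝ (Fin 3)) 1 := by
    rw [mem_sphere_zero_iff_norm, EuclideanSpace.norm_eq]
    simp [pt, Fin.sum_univ_three]
  haveI : Nonempty ↥(Metric.sphere (0 : EuclideanSpace ℝ (Fin 3)) 1) := ⟨⟨_, hy0⟩⟩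
  have bdd : BddAbove (Set.range fun y : ↥(Metric.sphere (0 : EuclideanSpace ℝ (Fin 3)) 1) =>
      ⨅ i, dist (y : EuclideanSpace ℝ (Fin 3)) (Qconf i)) := by
    refine ⟨Real.sqrt 2, ?_⟩
    rintro r ⟨y, rfl⟩
    exact inner_le y y.2
  apply le_antisymm
  · exact ciSup_le fun y => inner_le y y.2
  · refine le_trans ?_ (le_ciSup bdd (⟨pt 0 (-1) 0, hy0⟩ :
      ↥(Metric.sphere (0 : EuclideanSpace ℝ (Fin 3)) 1)))
    refine le_ciInf fun i => ?_
    fin_cases i <;>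
      · show Real.sqrt 2 ≤ dist (pt _ _ _) (pt _ _ _)
        rw [dist_pt]
        apply Real.sqrt_le_sqrt
        norm_num

theorem stmt_11 :
    (∀ i, Qconf i ∈ Metric.sphere (0 : EuclideanSpace ℝ (Fin 3)) 1) ∧
    sep Qconf = Real.sqrt 2 ∧
    mesh (Metric.sphere (0 : EuclideanSpace ℝ (Fin 3)) 1) Qconf = Real.sqrt 2 ∧
    mesh (Metric.sphere (0 : EuclideanSpace ℝ (Fin 3)) 1) Qconf / sep Qconf = 1 := by
  refine ⟨?_, sep_eq, mesh_eq, ?_⟩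
  · intro i
    fin_cases i <;>
      · rw [mem_sphere_zero_iff_norm, EuclideanSpace.norm_eq]
        simp [Qconf, pt, Fin.sum_univ_three]
  · rw [sep_eq, mesh_eq, div_self (by positivity : Real.sqrt 2 ≠ 0)]
end

section
/- limsup_{s→∞} 2^{s/2} E_s(S², 5) ≤ 8, where E_s(S², 5) is the minimal 5-point Riesz s-energy of the unit sphere S². -/
set_option maxHeartbeats 1000000

open scoped BigOperators
open Filter Metric Topology

namespace Stmt13Aux

lemma energy_expand (s : ℝ) (x : Fin 5 → EuclideanSpace ℝ (Fin 3)) :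
    energy s x = dist (x 0) (x 1) ^ (-s) + dist (x 0) (x 2) ^ (-s) + dist (x 0) (x 3) ^ (-s) + dist (x 0) (x 4) ^ (-s) + dist (x 1) (x 0) ^ (-s) + dist (x 1) (x 2) ^ (-s) + dist (x 1) (x 3) ^ (-s) + dist (x 1) (x 4) ^ (-s) + dist (x 2) (x 0) ^ (-s) + dist (x 2) (x 1) ^ (-s) + dist (x 2) (x 3) ^ (-s) + dist (x 2) (x 4) ^ (-s) + dist (x 3) (x 0) ^ (-s) + dist (x 3) (x 1) ^ (-s) + dist (x 3) (x 2) ^ (-s) + dist (x 3) (x 4) ^ (-s) + dist (x 4) (x 0) ^ (-s) + dist (x 4) (x 1) ^ (-s) + dist (x 4) (x 2) ^ (-s) + dist (x 4) (x 3) ^ (-s) := by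
  rw [energy]
  simp only [Fin.sum_univ_five, Finset.sum_filter]
  simp (config := { decide := true }) only [ne_eq, if_true, if_false]
  ring

noncomputable def P (t : ℝ) : Fin 5 → EuclideanSpace ℝ (Fin 3) :=
  ![(WithLp.equiv 2 _).symm ![Real.sqrt (1-t^2), -t, 0],
    (WithLp.equiv 2 _).symm ![-Real.sqrt (1-t^2), -t, 0],
    (WithLp.equiv 2 _).symm ![0, -t, Real.sqrt (1-t^2)],
    (WithLp.equiv 2 _).symm ![0, -t, -Real.sqrt (1-t^2)],
    (WithLp.equiv 2 _).symm ![0, 1, 0]]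

lemma dist3 (u v : Fin 3 → ℝ) :
    dist ((WithLp.equiv 2 (Fin 3 → ℝ)).symm u) ((WithLp.equiv 2 (Fin 3 → ℝ)).symm v)
      = Real.sqrt ((u 0 - v 0)^2 + (u 1 - v 1)^2 + (u 2 - v 2)^2) := by
  rw [EuclideanSpace.dist_eq]
  simp [Fin.sum_univ_three, Real.dist_eq, sq_abs]

lemma energyP (s t : ℝ) (h2 : (0:ℝ) ≤ 1 - t^2) :
    energy s (P t) = 8 * Real.sqrt (2*(1-t^2)) ^ (-s) + 4 * Real.sqrt (4*(1-t^2)) ^ (-s)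
      + 8 * Real.sqrt (2+2*t) ^ (-s) := by
  have hs := Real.sq_sqrt h2
  have d01 : dist (P t 0) (P t 1) = Real.sqrt (4*(1-t^2)) := by
    simp only [P, Matrix.cons_val_zero, Matrix.cons_val_one, Matrix.head_cons,
      Matrix.cons_val_two, Matrix.tail_cons, Matrix.cons_val_three, Matrix.cons_val_four]
    rw [dist3]
    simp only [Matrix.cons_val_zero, Matrix.cons_val_one, Matrix.head_cons,
      Matrix.cons_val_two, Matrix.tail_cons]
    congr 1; ring_nf; linarith [hs]
  have d02 : dist (P t 0) (P t 2) = Real.sqrt (2*(1-t^2)) := by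
    simp only [P, Matrix.cons_val_zero, Matrix.cons_val_one, Matrix.head_cons,
      Matrix.cons_val_two, Matrix.tail_cons, Matrix.cons_val_three, Matrix.cons_val_four]
    rw [dist3]
    simp only [Matrix.cons_val_zero, Matrix.cons_val_one, Matrix.head_cons,
      Matrix.cons_val_two, Matrix.tail_cons]
    congr 1; ring_nf; linarith [hs]
  have d03 : dist (P t 0) (P t 3) = Real.sqrt (2*(1-t^2)) := by
    simp only [P, Matrix.cons_val_zero, Matrix.cons_val_one, Matrix.head_cons,
      Matrix.cons_val_two, Matrix.tail_cons, Matrix.cons_val_three, Matrix.cons_val_four]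
    rw [dist3]
    simp only [Matrix.cons_val_zero, Matrix.cons_val_one, Matrix.head_cons,
      Matrix.cons_val_two, Matrix.tail_cons]
    congr 1; ring_nf; linarith [hs]
  have d04 : dist (P t 0) (P t 4) = Real.sqrt (2+2*t) := by
    simp only [P, Matrix.cons_val_zero, Matrix.cons_val_one, Matrix.head_cons,
      Matrix.cons_val_two, Matrix.tail_cons, Matrix.cons_val_three, Matrix.cons_val_four]
    rw [dist3]
    simp only [Matrix.cons_val_zero, Matrix.cons_val_one, Matrix.head_cons,
      Matrix.cons_val_two, Matrix.tail_cons]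
    congr 1; ring_nf; linarith [hs]
  have d10 : dist (P t 1) (P t 0) = Real.sqrt (4*(1-t^2)) := by rw [dist_comm]; exact d01
  have d12 : dist (P t 1) (P t 2) = Real.sqrt (2*(1-t^2)) := by
    simp only [P, Matrix.cons_val_zero, Matrix.cons_val_one, Matrix.head_cons,
      Matrix.cons_val_two, Matrix.tail_cons, Matrix.cons_val_three, Matrix.cons_val_four]
    rw [dist3]
    simp only [Matrix.cons_val_zero, Matrix.cons_val_one, Matrix.head_cons,
      Matrix.cons_val_two, Matrix.tail_cons]
    congr 1; ring_nf; linarith [hs]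
  have d13 : dist (P t 1) (P t 3) = Real.sqrt (2*(1-t^2)) := by
    simp only [P, Matrix.cons_val_zero, Matrix.cons_val_one, Matrix.head_cons,
      Matrix.cons_val_two, Matrix.tail_cons, Matrix.cons_val_three, Matrix.cons_val_four]
    rw [dist3]
    simp only [Matrix.cons_val_zero, Matrix.cons_val_one, Matrix.head_cons,
      Matrix.cons_val_two, Matrix.tail_cons]
    congr 1; ring_nf; linarith [hs]
  have d14 : dist (P t 1) (P t 4) = Real.sqrt (2+2*t) := by
    simp only [P, Matrix.cons_val_zero, Matrix.cons_val_one, Matrix.head_cons,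
      Matrix.cons_val_two, Matrix.tail_cons, Matrix.cons_val_three, Matrix.cons_val_four]
    rw [dist3]
    simp only [Matrix.cons_val_zero, Matrix.cons_val_one, Matrix.head_cons,
      Matrix.cons_val_two, Matrix.tail_cons]
    congr 1; ring_nf; linarith [hs]
  have d20 : dist (P t 2) (P t 0) = Real.sqrt (2*(1-t^2)) := by rw [dist_comm]; exact d02
  have d21 : dist (P t 2) (P t 1) = Real.sqrt (2*(1-t^2)) := by rw [dist_comm]; exact d12
  have d23 : dist (P t 2) (P t 3) = Real.sqrt (4*(1-t^2)) := by
    simp only [P, Matrix.cons_val_zero, Matrix.cons_val_one, Matrix.head_cons,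
      Matrix.cons_val_two, Matrix.tail_cons, Matrix.cons_val_three, Matrix.cons_val_four]
    rw [dist3]
    simp only [Matrix.cons_val_zero, Matrix.cons_val_one, Matrix.head_cons,
      Matrix.cons_val_two, Matrix.tail_cons]
    congr 1; ring_nf; linarith [hs]
  have d24 : dist (P t 2) (P t 4) = Real.sqrt (2+2*t) := by
    simp only [P, Matrix.cons_val_zero, Matrix.cons_val_one, Matrix.head_cons,
      Matrix.cons_val_two, Matrix.tail_cons, Matrix.cons_val_three, Matrix.cons_val_four]
    rw [dist3]
    simp only [Matrix.cons_val_zero, Matrix.cons_val_one, Matrix.head_cons,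
      Matrix.cons_val_two, Matrix.tail_cons]
    congr 1; ring_nf; linarith [hs]
  have d30 : dist (P t 3) (P t 0) = Real.sqrt (2*(1-t^2)) := by rw [dist_comm]; exact d03
  have d31 : dist (P t 3) (P t 1) = Real.sqrt (2*(1-t^2)) := by rw [dist_comm]; exact d13
  have d32 : dist (P t 3) (P t 2) = Real.sqrt (4*(1-t^2)) := by rw [dist_comm]; exact d23
  have d34 : dist (P t 3) (P t 4) = Real.sqrt (2+2*t) := by
    simp only [P, Matrix.cons_val_zero, Matrix.cons_val_one, Matrix.head_cons,
      Matrix.cons_val_two, Matrix.tail_cons, Matrix.cons_val_three, Matrix.cons_val_four]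
    rw [dist3]
    simp only [Matrix.cons_val_zero, Matrix.cons_val_one, Matrix.head_cons,
      Matrix.cons_val_two, Matrix.tail_cons]
    congr 1; ring_nf; linarith [hs]
  have d40 : dist (P t 4) (P t 0) = Real.sqrt (2+2*t) := by rw [dist_comm]; exact d04
  have d41 : dist (P t 4) (P t 1) = Real.sqrt (2+2*t) := by rw [dist_comm]; exact d14
  have d42 : dist (P t 4) (P t 2) = Real.sqrt (2+2*t) := by rw [dist_comm]; exact d24
  have d43 : dist (P t 4) (P t 3) = Real.sqrt (2+2*t) := by rw [dist_comm]; exact d34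
  rw [energy_expand, d01, d02, d03, d04, d10, d12, d13, d14, d20, d21, d23, d24, d30, d31, d32, d34, d40, d41, d42, d43]
  ring

lemma injP (t : ℝ) (h0 : 0 < t) (h1 : t < 1) : Function.Injective (P t) := by
  have hr : 0 < Real.sqrt (1 - t^2) := Real.sqrt_pos.2 (by nlinarith)
  intro i j hij
  fin_cases i <;> fin_cases j <;> first
    | rfl
    | (exfalso; simp [P] at hij
       first | linarith | (obtain ⟨a0, a1⟩ := hij; linarith))

lemma memP (t : ℝ) (h : t^2 ≤ 1) (i : Fin 5) :
    P t i ∈ Metric.sphere (0 : EuclideanSpace ℝ (Fin 3)) 1 := by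
  rw [mem_sphere_zero_iff_norm, EuclideanSpace.norm_eq]
  fin_cases i <;> simp [P, Fin.sum_univ_three] <;> (try rw [Real.sq_sqrt (by linarith)]) <;> norm_num

lemma energy_nonneg {E : Type*} [MetricSpace E] {N : ℕ} (s : ℝ) (x : Fin N → E) :
    0 ≤ energy s x := by
  refine Finset.sum_nonneg fun i _ => Finset.sum_nonneg fun j _ => ?_
  exact Real.rpow_nonneg dist_nonneg _

lemma sqrt_rpow_neg (s z : ℝ) (hz : 0 ≤ z) : Real.sqrt z ^ (-s) = z ^ (-(s/2)) := by
  rw [Real.sqrt_eq_rpow, ← Real.rpow_mul hz]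
  congr 1; ring

noncomputable def f (s : ℝ) : ℝ :=
  8 * (1 - (s ^ (-(2:ℝ)/3))^2) ^ (-(s/2))
    + 4 * (2:ℝ) ^ (-(s/2)) * (1 - (s ^ (-(2:ℝ)/3))^2) ^ (-(s/2))
    + 8 * (1 + s ^ (-(2:ℝ)/3)) ^ (-(s/2))

lemma mul_energyP (s : ℝ) (hs : 1 < s) :
    (2:ℝ) ^ (s/2) * energy s (P (s ^ (-(2:ℝ)/3))) = f s := by
  set t := s ^ (-(2:ℝ)/3) with ht
  have ht0 : 0 < t := Real.rpow_pos_of_pos (by linarith) _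
  have ht1 : t < 1 := Real.rpow_lt_one_of_one_lt_of_neg hs (by norm_num)
  have h2 : (0:ℝ) ≤ 1 - t^2 := by nlinarith
  have h1t : (0:ℝ) ≤ 1 + t := by linarith
  have h22 : (2:ℝ) ^ (s/2) * (2:ℝ) ^ (-(s/2)) = 1 := by
    rw [← Real.rpow_add (by norm_num)]; norm_num
  have expand : (2:ℝ) ^ (s/2) * energy s (P t) = ((2:ℝ)^(s/2) * (2:ℝ)^(-(s/2))) *
      (8 * (1-t^2) ^ (-(s/2)) + 4 * (2:ℝ)^(-(s/2)) * (1-t^2) ^ (-(s/2))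
        + 8 * (1+t) ^ (-(s/2))) := by
    rw [energyP s t h2,
      show (2+2*t : ℝ) = 2*(1+t) by ring,
      show (4*(1-t^2) : ℝ) = 2*(2*(1-t^2)) by ring,
      sqrt_rpow_neg s _ (by nlinarith),
      sqrt_rpow_neg s _ (by nlinarith),
      sqrt_rpow_neg s _ (by nlinarith),
      Real.mul_rpow (by norm_num) h2,
      Real.mul_rpow (by norm_num) (by nlinarith : (0:ℝ) ≤ 2*(1-t^2)),
      Real.mul_rpow (by norm_num) h1t,
      Real.mul_rpow (by norm_num) h2]
    ring
  rw [expand, h22, one_mul]; rfl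


lemma tC : Tendsto (fun s : ℝ => (2:ℝ) ^ (-(s/2))) atTop (𝓝 0) := by
  have h : Tendsto (fun s : ℝ => Real.log 2 * -(s/2)) atTop atBot := by
    rw [show (fun s : ℝ => Real.log 2 * -(s/2)) = fun s : ℝ => (-(Real.log 2)/2) * s by
      funext s; ring]
    have hl2 : (0:ℝ) < Real.log 2 := Real.log_pos (by norm_num)
    rw [tendsto_const_mul_atBot_of_neg (by linarith : -(Real.log 2)/2 < 0)]
    exact tendsto_id
  have := Real.tendsto_exp_atBot.comp h
  refine this.congr fun s => ?_
  rw [Function.comp_apply, Real.rpow_def_of_pos (by norm_num : (0:ℝ) < 2)]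

lemma tA : Tendsto (fun s : ℝ => (1 - (s ^ (-(2:ℝ)/3))^2) ^ (-(s/2))) atTop (𝓝 1) := by
  have hfacts : ∀ᶠ s : ℝ in atTop,
      0 < (s ^ (-(2:ℝ)/3))^2 ∧ (s ^ (-(2:ℝ)/3))^2 ≤ 1/2 ∧
        (s ^ (-(2:ℝ)/3))^2 = s ^ (-(4:ℝ)/3) := by
    filter_upwards [eventually_ge_atTop (2:ℝ)] with s hs2
    have hs0 : (0:ℝ) < s := by linarith
    have heq : (s ^ (-(2:ℝ)/3))^2 = s ^ (-(4:ℝ)/3) := by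
      rw [← Real.rpow_natCast (s ^ (-(2:ℝ)/3)) 2, ← Real.rpow_mul hs0.le]
      norm_num
    refine ⟨by positivity, ?_, heq⟩
    rw [heq]
    calc s ^ (-(4:ℝ)/3) ≤ s ^ (-1:ℝ) :=
          Real.rpow_le_rpow_of_exponent_le (by linarith) (by norm_num)
      _ = s⁻¹ := Real.rpow_neg_one s
      _ ≤ 1/2 := by rw [inv_le_comm₀ (by linarith) (by norm_num)]; norm_num; linarith [hs2]
  have hg : Tendsto (fun s : ℝ => -(s/2) * Real.log (1 - (s ^ (-(2:ℝ)/3))^2))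
      atTop (𝓝 0) := by
    apply tendsto_of_tendsto_of_tendsto_of_le_of_le' tendsto_const_nhds
      (tendsto_rpow_neg_atTop (by norm_num : (0:ℝ) < 1/3))
    · filter_upwards [hfacts, eventually_ge_atTop (0:ℝ)] with s hf hs0
      obtain ⟨hx0, hx2, _⟩ := hf
      have : Real.log (1 - (s ^ (-(2:ℝ)/3))^2) ≤ 0 :=
        Real.log_nonpos (by linarith) (by linarith)
      nlinarith
    · filter_upwards [hfacts, eventually_ge_atTop (1:ℝ)] with s hf hs1
      obtain ⟨hx0, hx2, heq⟩ := hf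
      set x := (s ^ (-(2:ℝ)/3))^2 with hx
      have hx1 : x < 1 := by linarith
      have hlog : -Real.log (1 - x) ≤ x / (1 - x) := by
        have := Real.log_le_sub_one_of_pos (show (0:ℝ) < (1-x)⁻¹ by rw [inv_pos]; linarith)
        rw [Real.log_inv] at this
        have h1x : (1:ℝ) - x > 0 := by linarith
        calc -Real.log (1-x) ≤ (1-x)⁻¹ - 1 := this
          _ = x / (1-x) := by field_simp; ring
      have hfrac : x / (1 - x) ≤ 2 * x := by
        rw [div_le_iff₀ (by linarith)]
        nlinarith
      have hstep : -(s/2) * Real.log (1 - x) ≤ s * x := by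
        have h1 : -Real.log (1-x) ≤ 2*x := le_trans hlog hfrac
        nlinarith [Real.log_nonpos (by linarith : (0:ℝ) ≤ 1 - x) (by linarith : 1 - x ≤ 1)]
      calc -(s/2) * Real.log (1 - x) ≤ s * x := hstep
        _ = s ^ (1:ℝ) * s ^ (-(4:ℝ)/3) := by rw [Real.rpow_one, heq]
        _ = s ^ (-(1/3) : ℝ) := by
            rw [← Real.rpow_add (by linarith : (0:ℝ) < s)]; norm_num
  have := (Real.continuous_exp.tendsto 0).comp hg
  rw [Real.exp_zero] at this
  refine this.congr' ?_
  filter_upwards [hfacts] with s hf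
  obtain ⟨hx0, hx2, _⟩ := hf
  rw [Function.comp_apply, Real.rpow_def_of_pos
    (show (0:ℝ) < 1 - (s ^ (-(2:ℝ)/3))^2 by linarith), mul_comm]

lemma tB : Tendsto (fun s : ℝ => (1 + s ^ (-(2:ℝ)/3)) ^ (-(s/2))) atTop (𝓝 0) := by
  have hg : Tendsto (fun s : ℝ => -(s/2) * Real.log (1 + s ^ (-(2:ℝ)/3)))
      atTop atBot := by
    have hbound : Tendsto (fun s : ℝ => -(s ^ ((1:ℝ)/3)) / 4) atTop atBot := by
      have h13 : Tendsto (fun s : ℝ => s ^ ((1:ℝ)/3)) atTop atTop :=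
        tendsto_rpow_atTop (by norm_num)
      rw [show (fun s : ℝ => -(s ^ ((1:ℝ)/3)) / 4) =
        fun s : ℝ => (-(1:ℝ)/4) * s ^ ((1:ℝ)/3) by funext s; ring]
      exact (tendsto_const_mul_atBot_of_neg (by norm_num : -(1:ℝ)/4 < 0)).2 h13
    apply tendsto_atBot_mono' atTop ?_ hbound
    filter_upwards [eventually_ge_atTop (1:ℝ)] with s hs1
    have hs0 : (0:ℝ) < s := by linarith
    set t := s ^ (-(2:ℝ)/3) with ht
    have ht0 : 0 < t := Real.rpow_pos_of_pos hs0 _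
    have ht1 : t ≤ 1 := Real.rpow_le_one_of_one_le_of_nonpos hs1 (by norm_num)
    have hlog : t / 2 ≤ Real.log (1 + t) := by
      have := Real.log_le_sub_one_of_pos (show (0:ℝ) < (1+t)⁻¹ by rw [inv_pos]; linarith)
      rw [Real.log_inv] at this
      have h2 : -Real.log (1+t) ≤ (1+t)⁻¹ - 1 := this
      have h3 : (1+t)⁻¹ - 1 = -(t/(1+t)) := by field_simp; ring
      have h4 : t / 2 ≤ t / (1+t) :=
        div_le_div_of_nonneg_left ht0.le (by linarith) (by linarith)
      linarith [h2, h3 ▸ h2]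
    have hst : s * t = s ^ ((1:ℝ)/3) := by
      rw [ht, show (s : ℝ) * s ^ (-(2:ℝ)/3) = s ^ (1:ℝ) * s ^ (-(2:ℝ)/3) by
        rw [Real.rpow_one], ← Real.rpow_add hs0]
      norm_num
    have hmul : -(s/2) * Real.log (1+t) ≤ -(s/2) * (t/2) :=
      mul_le_mul_of_nonpos_left hlog (by linarith)
    calc -(s/2) * Real.log (1+t) ≤ -(s/2) * (t/2) := hmul
      _ = -(s*t)/4 := by ring
      _ = -(s ^ ((1:ℝ)/3)) / 4 := by rw [hst]
  have := Real.tendsto_exp_atBot.comp hg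
  refine this.congr' ?_
  filter_upwards [eventually_ge_atTop (1:ℝ)] with s hs1
  have ht0 : 0 < s ^ (-(2:ℝ)/3) := Real.rpow_pos_of_pos (by linarith) _
  rw [Function.comp_apply, Real.rpow_def_of_pos
    (show (0:ℝ) < 1 + s ^ (-(2:ℝ)/3) by linarith), mul_comm]

lemma tF : Tendsto f atTop (𝓝 8) := by
  have : Tendsto f atTop (𝓝 (8 * 1 + 4 * 0 * 1 + 8 * 0)) := by
    exact ((tA.const_mul 8).add (((tC.const_mul 4).mul tA))).add (tB.const_mul 8)
  norm_num at this
  exact this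

end Stmt13Aux

theorem stmt_13 :
    Filter.limsup
      (fun s : ℝ => (2 : ℝ) ^ (s / 2) *
        minEnergy (Metric.sphere (0 : EuclideanSpace ℝ (Fin 3)) 1) 5 s)
      Filter.atTop ≤ 8 := by
  have hnn : ∀ s : ℝ, 0 ≤ (2:ℝ) ^ (s/2) *
      minEnergy (Metric.sphere (0 : EuclideanSpace ℝ (Fin 3)) 1) 5 s := by
    intro s
    refine mul_nonneg (Real.rpow_nonneg (by norm_num) _) ?_
    rw [minEnergy]
    exact Real.iInf_nonneg fun x => Stmt13Aux.energy_nonneg s x.1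
  have hle : ∀ᶠ s : ℝ in atTop, (2:ℝ)^(s/2) *
      minEnergy (Metric.sphere (0 : EuclideanSpace ℝ (Fin 3)) 1) 5 s ≤ Stmt13Aux.f s := by
    filter_upwards [eventually_gt_atTop (1:ℝ)] with s hs
    set t := s ^ (-(2:ℝ)/3) with ht
    have ht0 : 0 < t := Real.rpow_pos_of_pos (by linarith) _
    have ht1 : t < 1 := Real.rpow_lt_one_of_one_lt_of_neg hs (by norm_num)
    have hmin : minEnergy (Metric.sphere (0 : EuclideanSpace ℝ (Fin 3)) 1) 5 s
        ≤ energy s (Stmt13Aux.P t) := by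
      rw [minEnergy]
      have hbdd : BddBelow (Set.range fun x : {x : Fin 5 → EuclideanSpace ℝ (Fin 3) //
          Function.Injective x ∧ ∀ i, x i ∈ Metric.sphere (0 : EuclideanSpace ℝ (Fin 3)) 1} =>
          energy s x.1) := ⟨0, by rintro _ ⟨x, rfl⟩; exact Stmt13Aux.energy_nonneg s x.1⟩
      exact ciInf_le hbdd ⟨Stmt13Aux.P t, Stmt13Aux.injP t ht0 ht1,
        Stmt13Aux.memP t (by nlinarith)⟩
    calc (2:ℝ)^(s/2) * minEnergy (Metric.sphere (0 : EuclideanSpace ℝ (Fin 3)) 1) 5 s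
        ≤ (2:ℝ)^(s/2) * energy s (Stmt13Aux.P t) :=
          mul_le_mul_of_nonneg_left hmin (Real.rpow_nonneg (by norm_num) _)
      _ = Stmt13Aux.f s := Stmt13Aux.mul_energyP s hs
  refine le_trans (limsup_le_limsup hle (isCoboundedUnder_le_of_le atTop hnn)
    Stmt13Aux.tF.isBoundedUnder_le) ?_
  exact le_of_eq Stmt13Aux.tF.limsup_eq
end
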